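/- arXiv:1705.04050 — 7 statements merged into one kernel-verified Lean document; each statement's English description precedes it below -/
import Mathlib

section
/- Let n ≥ 1 be an integer, 0 < α < n and γ > 0. Then the Bessel-Riesz kernel K_{α,γ}(x) = |x|^{α−n}/(1+|x|)^γ belongs to the Morrey space L^{s,t}(ℝⁿ) for every 1 ≤ s < t = n/(n−α), with ||K_{α,γ}||_{L^{s,t}} ≤ ||K_α||_{L^{s,t}} < ∞, since K_{α,γ}(x) ≤ K_α(x) = |x|^{α−n} for every x ≠ 0. -/
open MeasureTheory Metric
open scoped ENNReal NNReal

/-- The Riesz kernel `K_α(x) = |x|^{α-n}`. -/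
noncomputable def rieszKernel (n : ℕ) (α : ℝ) (x : EuclideanSpace ℝ (Fin n)) : ℝ :=
  ‖x‖ ^ (α - (n : ℝ))

/-- The Bessel-Riesz kernel `K_{α,γ}(x) = |x|^{α-n} / (1+|x|)^γ`. -/
noncomputable def besselRieszKernel (n : ℕ) (α γ : ℝ) (x : EuclideanSpace ℝ (Fin n)) : ℝ :=
  ‖x‖ ^ (α - (n : ℝ)) / (1 + ‖x‖) ^ γ

/-- The Bessel-Riesz operator `I_{α,γ} f (x) = ∫ K_{α,γ}(x-y) f(y) dy`. -/
noncomputable def besselRiesz (n : ℕ) (α γ : ℝ)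
    (f : EuclideanSpace ℝ (Fin n) → ℝ) (x : EuclideanSpace ℝ (Fin n)) : ℝ :=
  ∫ y, besselRieszKernel n α γ (x - y) * f y

/-- The Morrey norm `‖f‖_{L^{p,q}} = sup_B |B|^{1/q-1/p} (∫_B |f|^p)^{1/p}`. -/
noncomputable def morreyNorm (n : ℕ) (p q : ℝ)
    (f : EuclideanSpace ℝ (Fin n) → ℝ) : ℝ≥0∞ :=
  ⨆ (a : EuclideanSpace ℝ (Fin n)) (R : ℝ) (_ : 0 < R),
    volume (ball a R) ^ (1 / q - 1 / p) *
      (∫⁻ x in ball a R, ENNReal.ofReal (|f x| ^ p)) ^ (1 / p)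

/-- The generalized Morrey norm
`‖f‖_{L^{p,φ}} = sup_B (1/φ(R)) ((1/|B|) ∫_B |f|^p)^{1/p}`. -/
noncomputable def gMorreyNorm (n : ℕ) (p : ℝ) (φ : ℝ → ℝ)
    (f : EuclideanSpace ℝ (Fin n) → ℝ) : ℝ≥0∞ :=
  ⨆ (a : EuclideanSpace ℝ (Fin n)) (R : ℝ) (_ : 0 < R),
    (ENNReal.ofReal (φ R))⁻¹ *
      ((volume (ball a R))⁻¹ * ∫⁻ x in ball a R, ENNReal.ofReal (|f x| ^ p)) ^ (1 / p)

/-- `φ : (0,∞) → (0,∞)` is of class `G_p`: positive on `(0,∞)`, almost decreasing, and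
`r ↦ φ(r)^p r^n` is almost increasing. -/
def IsClassG (n : ℕ) (p : ℝ) (φ : ℝ → ℝ) : Prop :=
  (∀ r : ℝ, 0 < r → 0 < φ r) ∧
  (∃ C : ℝ, 0 < C ∧ ∀ r s : ℝ, 0 < r → r ≤ s → C * φ s ≤ φ r) ∧
  (∃ C : ℝ, 0 < C ∧ ∀ r s : ℝ, 0 < r → r ≤ s →
    φ r ^ p * r ^ (n : ℝ) ≤ C * (φ s ^ p * s ^ (n : ℝ)))

/-- `ρ` is almost increasing on `(0,∞)`. -/
def IsAlmostIncreasing (ρ : ℝ → ℝ) : Prop :=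
  ∃ C : ℝ, 0 < C ∧ ∀ r s : ℝ, 0 < r → r ≤ s → ρ r ≤ C * ρ s

/-- Operator norm of `I_{α,γ}` from `L^{p₁,φ}` to `L^{p₂,ψ}`. -/
noncomputable def besselRieszOpNormGM (n : ℕ) (α γ p₁ p₂ : ℝ) (φ ψ : ℝ → ℝ) : ℝ≥0∞ :=
  ⨆ f : {f : EuclideanSpace ℝ (Fin n) → ℝ //
      Measurable f ∧ gMorreyNorm n p₁ φ f ≠ 0 ∧ gMorreyNorm n p₁ φ f ≠ ⊤},
    gMorreyNorm n p₂ ψ (besselRiesz n α γ f.1) / gMorreyNorm n p₁ φ f.1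

section RieszAux

/-- Volume of a ball in `EuclideanSpace ℝ (Fin n)` for `n ≥ 1`. -/
lemma volume_ball_eq_aux (n : ℕ) (hn : 1 ≤ n) (a : EuclideanSpace ℝ (Fin n)) {R : ℝ}
    (hR : 0 ≤ R) :
    volume (ball a R) =
      ENNReal.ofReal (R ^ n) * volume (ball (0 : EuclideanSpace ℝ (Fin n)) 1) := by
  haveI : Nontrivial (EuclideanSpace ℝ (Fin n)) := by
    haveI : NeZero n := ⟨by omega⟩
    exact inferInstanceAs (Nontrivial (PiLp 2 fun _ : Fin n => ℝ))
  rw [Measure.addHaar_ball volume a hR, finrank_euclideanSpace_fin]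

/-- Dyadic annulus estimate for the integral of `‖x‖ ^ p` over a ball centered at the origin. -/
lemma lintegral_rpow_ball_zero_aux (n : ℕ) (hn : 1 ≤ n) (p : ℝ) (hp : p < 0)
    (hnp : 0 < (n : ℝ) + p) {R : ℝ} (hR : 0 < R) :
    ∫⁻ x in ball (0 : EuclideanSpace ℝ (Fin n)) R, ENNReal.ofReal (‖x‖ ^ p) ≤
      volume (ball (0 : EuclideanSpace ℝ (Fin n)) 1) * ENNReal.ofReal (R ^ ((n : ℝ) + p)) *
        (ENNReal.ofReal ((2 : ℝ)⁻¹ ^ p) *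
          (1 - ENNReal.ofReal ((2 : ℝ)⁻¹ ^ ((n : ℝ) + p)))⁻¹) := by
  haveI : Nontrivial (EuclideanSpace ℝ (Fin n)) := by
    haveI : NeZero n := ⟨by omega⟩
    exact inferInstanceAs (Nontrivial (PiLp 2 fun _ : Fin n => ℝ))
  set V := volume (ball (0 : EuclideanSpace ℝ (Fin n)) 1) with hV
  have h2 : (0 : ℝ) < 2⁻¹ := by norm_num
  set c : ℕ → ℝ := fun k => R * (2 : ℝ)⁻¹ ^ k with hc_def
  have hc : ∀ k, 0 < c k := fun k => by positivity
  set A : ℕ → Set (EuclideanSpace ℝ (Fin n)) :=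
    fun k => ball (0 : EuclideanSpace ℝ (Fin n)) (c k) \ ball 0 (c (k + 1)) with hA_def
  -- covering
  have cover : ball (0 : EuclideanSpace ℝ (Fin n)) R ⊆ {0} ∪ ⋃ k, A k := by
    intro x hx
    rcases eq_or_ne x 0 with h | h
    · exact Set.mem_union_left _ (by simp [h])
    right
    have hx0 : 0 < ‖x‖ := norm_pos_iff.2 h
    have hxR : ‖x‖ < R := by simpa [mem_ball_zero_iff] using hx
    have hex : ∃ k, c (k + 1) ≤ ‖x‖ := by
      obtain ⟨m, hm⟩ := exists_pow_lt_of_lt_one (div_pos hx0 hR) (by norm_num : (2 : ℝ)⁻¹ < 1)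
      refine ⟨m, ?_⟩
      have h1 : ((2 : ℝ)⁻¹) ^ (m + 1) ≤ (2 : ℝ)⁻¹ ^ m :=
        pow_le_pow_of_le_one h2.le (by norm_num) (Nat.le_succ m)
      have : R * (2 : ℝ)⁻¹ ^ m ≤ ‖x‖ := by
        have h' := (lt_div_iff₀ hR).1 hm
        nlinarith
      calc c (m + 1) ≤ R * (2 : ℝ)⁻¹ ^ m := by
            simp only [hc_def]
            exact mul_le_mul_of_nonneg_left h1 hR.le
        _ ≤ ‖x‖ := this
    refine Set.mem_iUnion.2 ⟨Nat.find hex, ?_, ?_⟩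
    · refine mem_ball_zero_iff.2 ?_
      rcases hk : Nat.find hex with _ | j
      · simpa [hc_def] using hxR
      · have hmin := Nat.find_min hex (m := j) (by omega)
        exact lt_of_not_ge hmin
    · intro hmem
      exact absurd (mem_ball_zero_iff.1 hmem) (not_lt.2 (Nat.find_spec hex))
  set q : ℝ := (2 : ℝ)⁻¹ ^ ((n : ℝ) + p) with hq_def
  have hq_pos : 0 < q := Real.rpow_pos_of_pos h2 _
  have hq_lt : q < 1 := Real.rpow_lt_one h2.le (by norm_num) hnp
  -- per-annulus bound
  have hterm : ∀ k, ∫⁻ x in A k, ENNReal.ofReal (‖x‖ ^ p) ≤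
      V * ENNReal.ofReal (R ^ ((n : ℝ) + p) * (2 : ℝ)⁻¹ ^ p) * ENNReal.ofReal q ^ k := by
    intro k
    have key : c (k + 1) ^ p * (c k : ℝ) ^ (n : ℕ) =
        R ^ ((n : ℝ) + p) * (2 : ℝ)⁻¹ ^ p * q ^ k := by
      have e1 : c (k + 1) = c k * 2⁻¹ := by simp only [hc_def, pow_succ]; ring
      have eck : c k = R * (2 : ℝ)⁻¹ ^ (k : ℝ) := by
        rw [Real.rpow_natCast]
      calc c (k + 1) ^ p * (c k : ℝ) ^ (n : ℕ)
          = (c k * 2⁻¹) ^ p * c k ^ (n : ℝ) := by rw [e1, Real.rpow_natCast]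
        _ = c k ^ p * 2⁻¹ ^ p * c k ^ (n : ℝ) := by rw [Real.mul_rpow (hc k).le h2.le]
        _ = c k ^ ((n : ℝ) + p) * 2⁻¹ ^ p := by rw [Real.rpow_add (hc k)]; ring
        _ = R ^ ((n : ℝ) + p) * ((2 : ℝ)⁻¹ ^ (k : ℝ)) ^ ((n : ℝ) + p) * 2⁻¹ ^ p := by
            rw [eck, Real.mul_rpow hR.le (by positivity)]
        _ = R ^ ((n : ℝ) + p) * (2 : ℝ)⁻¹ ^ p * q ^ k := by
            rw [hq_def, ← Real.rpow_natCast ((2 : ℝ)⁻¹ ^ ((n : ℝ) + p)) k,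
              ← Real.rpow_mul h2.le, ← Real.rpow_mul h2.le, mul_comm ((n : ℝ) + p) (k : ℝ)]
            ring
    have hAm : MeasurableSet (A k) := measurableSet_ball.diff measurableSet_ball
    calc ∫⁻ x in A k, ENNReal.ofReal (‖x‖ ^ p)
        ≤ ∫⁻ _ in A k, ENNReal.ofReal (c (k + 1) ^ p) := by
          refine setLIntegral_mono' hAm fun x hx => ?_
          have hle : c (k + 1) ≤ ‖x‖ :=
            le_of_not_gt fun hcon => hx.2 (mem_ball_zero_iff.2 hcon)
          exact ENNReal.ofReal_le_ofReal
            (Real.rpow_le_rpow_of_nonpos (hc _) hle hp.le)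
      _ = ENNReal.ofReal (c (k + 1) ^ p) * volume (A k) := setLIntegral_const _ _
      _ ≤ ENNReal.ofReal (c (k + 1) ^ p) * (ENNReal.ofReal ((c k) ^ n) * V) := by
          refine mul_le_mul_right ?_ _
          rw [← volume_ball_eq_aux n hn 0 (hc k).le]
          exact measure_mono Set.diff_subset
      _ = V * ENNReal.ofReal (R ^ ((n : ℝ) + p) * (2 : ℝ)⁻¹ ^ p) * ENNReal.ofReal q ^ k := by
          rw [← mul_assoc, ← ENNReal.ofReal_mul (Real.rpow_nonneg (hc _).le _), key,
            ENNReal.ofReal_mul (by positivity), ENNReal.ofReal_pow hq_pos.le]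
          ring
  calc ∫⁻ x in ball (0 : EuclideanSpace ℝ (Fin n)) R, ENNReal.ofReal (‖x‖ ^ p)
      ≤ ∫⁻ x in ({0} ∪ ⋃ k, A k : Set (EuclideanSpace ℝ (Fin n))),
          ENNReal.ofReal (‖x‖ ^ p) := lintegral_mono_set cover
    _ ≤ (∫⁻ x in ({0} : Set (EuclideanSpace ℝ (Fin n))), ENNReal.ofReal (‖x‖ ^ p)) +
        ∫⁻ x in ⋃ k, A k, ENNReal.ofReal (‖x‖ ^ p) := lintegral_union_le _ _ _
    _ ≤ 0 + ∑' k, ∫⁻ x in A k, ENNReal.ofReal (‖x‖ ^ p) := by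
        gcongr
        · exact le_of_eq (setLIntegral_measure_zero _ _ (measure_singleton 0))
        · exact lintegral_iUnion_le _ _
    _ ≤ ∑' k, V * ENNReal.ofReal (R ^ ((n : ℝ) + p) * (2 : ℝ)⁻¹ ^ p) * ENNReal.ofReal q ^ k := by
        rw [zero_add]; exact ENNReal.tsum_le_tsum hterm
    _ = V * ENNReal.ofReal (R ^ ((n : ℝ) + p) * (2 : ℝ)⁻¹ ^ p) *
          (1 - ENNReal.ofReal q)⁻¹ := by
        rw [ENNReal.tsum_mul_left, ENNReal.tsum_geometric]
    _ = V * ENNReal.ofReal (R ^ ((n : ℝ) + p)) *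
          (ENNReal.ofReal ((2 : ℝ)⁻¹ ^ p) * (1 - ENNReal.ofReal q)⁻¹) := by
        rw [ENNReal.ofReal_mul (Real.rpow_nonneg hR.le _)]
        ring

/-- Uniform bound over all balls. -/
lemma lintegral_rpow_ball_aux (n : ℕ) (hn : 1 ≤ n) (p : ℝ) (hp : p < 0)
    (hnp : 0 < (n : ℝ) + p) (a : EuclideanSpace ℝ (Fin n)) {R : ℝ} (hR : 0 < R) :
    ∫⁻ x in ball a R, ENNReal.ofReal (‖x‖ ^ p) ≤
      volume (ball (0 : EuclideanSpace ℝ (Fin n)) 1) * ENNReal.ofReal (R ^ ((n : ℝ) + p)) *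
        (ENNReal.ofReal ((3 : ℝ) ^ ((n : ℝ) + p)) *
          (ENNReal.ofReal ((2 : ℝ)⁻¹ ^ p) *
            (1 - ENNReal.ofReal ((2 : ℝ)⁻¹ ^ ((n : ℝ) + p)))⁻¹) + 1) := by
  set V := volume (ball (0 : EuclideanSpace ℝ (Fin n)) 1) with hV
  set G : ℝ≥0∞ := ENNReal.ofReal ((2 : ℝ)⁻¹ ^ p) *
    (1 - ENNReal.ofReal ((2 : ℝ)⁻¹ ^ ((n : ℝ) + p)))⁻¹ with hG
  rcases le_or_gt ‖a‖ (2 * R) with hcase | hcase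
  · -- ball a R ⊆ ball 0 (3R)
    have hsub : ball a R ⊆ ball (0 : EuclideanSpace ℝ (Fin n)) (3 * R) := by
      intro x hx
      have hd : dist x a < R := mem_ball.1 hx
      have h1 : ‖x‖ - ‖a‖ ≤ ‖x - a‖ := norm_sub_norm_le x a
      have h2 : ‖x - a‖ = dist x a := (dist_eq_norm x a).symm
      refine mem_ball_zero_iff.2 ?_
      nlinarith
    calc ∫⁻ x in ball a R, ENNReal.ofReal (‖x‖ ^ p)
        ≤ ∫⁻ x in ball (0 : EuclideanSpace ℝ (Fin n)) (3 * R), ENNReal.ofReal (‖x‖ ^ p) :=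
          lintegral_mono_set hsub
      _ ≤ V * ENNReal.ofReal ((3 * R) ^ ((n : ℝ) + p)) * G :=
          lintegral_rpow_ball_zero_aux n hn p hp hnp (by linarith)
      _ = V * ENNReal.ofReal (R ^ ((n : ℝ) + p)) *
            (ENNReal.ofReal ((3 : ℝ) ^ ((n : ℝ) + p)) * G) := by
          rw [Real.mul_rpow (by norm_num) hR.le,
            ENNReal.ofReal_mul (Real.rpow_nonneg (by norm_num) _)]
          ring
      _ ≤ V * ENNReal.ofReal (R ^ ((n : ℝ) + p)) *
            (ENNReal.ofReal ((3 : ℝ) ^ ((n : ℝ) + p)) * G + 1) :=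
          mul_le_mul_right le_self_add _
  · -- far away: ‖x‖ > R on the ball
    have hbound : ∀ x ∈ ball a R, ENNReal.ofReal (‖x‖ ^ p) ≤ ENNReal.ofReal (R ^ p) := by
      intro x hx
      have hd : dist x a < R := mem_ball.1 hx
      have h1 : ‖a‖ - ‖x‖ ≤ ‖a - x‖ := norm_sub_norm_le a x
      have h2 : ‖a - x‖ = dist x a := by rw [← dist_eq_norm]; exact dist_comm a x
      have hRx : R ≤ ‖x‖ := by nlinarith
      exact ENNReal.ofReal_le_ofReal (Real.rpow_le_rpow_of_nonpos hR hRx hp.le)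
    calc ∫⁻ x in ball a R, ENNReal.ofReal (‖x‖ ^ p)
        ≤ ∫⁻ _ in ball a R, ENNReal.ofReal (R ^ p) :=
          setLIntegral_mono' measurableSet_ball hbound
      _ = ENNReal.ofReal (R ^ p) * volume (ball a R) := setLIntegral_const _ _
      _ = ENNReal.ofReal (R ^ p) * (ENNReal.ofReal (R ^ n) * V) := by
          rw [volume_ball_eq_aux n hn a hR.le]
      _ = V * ENNReal.ofReal (R ^ ((n : ℝ) + p)) * 1 := by
          rw [← mul_assoc, ← ENNReal.ofReal_mul (Real.rpow_nonneg hR.le _),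
            show R ^ p * R ^ (n : ℕ) = R ^ ((n : ℝ) + p) by
              rw [← Real.rpow_natCast R n, ← Real.rpow_add hR, add_comm]]
          ring
      _ ≤ V * ENNReal.ofReal (R ^ ((n : ℝ) + p)) *
            (ENNReal.ofReal ((3 : ℝ) ^ ((n : ℝ) + p)) * G + 1) :=
          mul_le_mul_right le_add_self _

end RieszAux

/-- For `n ≥ 1`, `0 < α < n`, `γ > 0`, the Bessel-Riesz kernel `K_{α,γ}`
belongs to `L^{s,t}(ℝⁿ)` for every `1 ≤ s < t = n/(n-α)`, with
`‖K_{α,γ}‖_{L^{s,t}} ≤ ‖K_α‖_{L^{s,t}} < ∞`. -/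
theorem besselRieszKernel_mem_morrey (n : ℕ) (hn : 1 ≤ n) (α γ s t : ℝ)
    (hα0 : 0 < α) (hαn : α < n) (hγ : 0 < γ)
    (ht : t = n / (n - α)) (hs1 : 1 ≤ s) (hst : s < t) :
    morreyNorm n s t (besselRieszKernel n α γ) ≤ morreyNorm n s t (rieszKernel n α) ∧
      morreyNorm n s t (rieszKernel n α) < ⊤ := by
  have hs0 : (0 : ℝ) < s := lt_of_lt_of_le one_pos hs1
  have hna : (0 : ℝ) < (n : ℝ) - α := by linarith
  have hn0 : (0 : ℝ) < (n : ℝ) := by exact_mod_cast lt_of_lt_of_le one_pos (by exact_mod_cast hn)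
  constructor
  · -- monotonicity of the Morrey norm under the pointwise bound
    refine iSup_mono fun a => iSup_mono fun R => iSup_mono fun hR => ?_
    refine mul_le_mul_right (ENNReal.rpow_le_rpow (lintegral_mono fun x => ?_)
      (by positivity)) _
    refine ENNReal.ofReal_le_ofReal (Real.rpow_le_rpow (abs_nonneg _) ?_ hs0.le)
    have hden : (1 : ℝ) ≤ (1 + ‖x‖) ^ γ :=
      Real.one_le_rpow (by linarith [norm_nonneg x]) hγ.le
    have hdpos : (0 : ℝ) < (1 + ‖x‖) ^ γ := lt_of_lt_of_le one_pos hden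
    rw [besselRieszKernel, rieszKernel, abs_div, abs_of_pos hdpos]
    exact div_le_self (abs_nonneg _) hden
  · -- finiteness
    set V := volume (ball (0 : EuclideanSpace ℝ (Fin n)) 1) with hV
    have hV0 : V ≠ 0 := (measure_ball_pos volume 0 one_pos).ne'
    have hVt : V ≠ ⊤ := measure_ball_lt_top.ne
    set p : ℝ := (α - n) * s with hp_def
    have hp : p < 0 := mul_neg_of_neg_of_pos (by linarith) hs0
    have hst' : s * ((n : ℝ) - α) < n := by
      rw [ht] at hst
      exact (lt_div_iff₀ hna).1 hst
    have hnp : 0 < (n : ℝ) + p := by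
      have : p = -(s * ((n : ℝ) - α)) := by rw [hp_def]; ring
      rw [this]; linarith
    set G : ℝ≥0∞ := ENNReal.ofReal ((2 : ℝ)⁻¹ ^ p) *
      (1 - ENNReal.ofReal ((2 : ℝ)⁻¹ ^ ((n : ℝ) + p)))⁻¹ with hG
    set D : ℝ≥0∞ := ENNReal.ofReal ((3 : ℝ) ^ ((n : ℝ) + p)) * G + 1 with hD
    have hD0 : D ≠ 0 := by
      rw [hD]
      exact (lt_of_lt_of_le one_pos le_add_self).ne'
    have hGt : G ≠ ⊤ := by
      rw [hG]
      refine ENNReal.mul_ne_top ENNReal.ofReal_ne_top ?_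
      rw [ENNReal.inv_ne_top]
      have hqlt : ENNReal.ofReal ((2 : ℝ)⁻¹ ^ ((n : ℝ) + p)) < 1 :=
        ENNReal.ofReal_lt_one.2 (Real.rpow_lt_one (by norm_num) (by norm_num) hnp)
      exact (tsub_pos_iff_lt.2 hqlt).ne'
    have hDt : D ≠ ⊤ := by
      rw [hD]
      exact ENNReal.add_ne_top.2 ⟨ENNReal.mul_ne_top ENNReal.ofReal_ne_top hGt, ENNReal.one_ne_top⟩
    set M : ℝ≥0∞ := V ^ (1 / t - 1 / s) * (V ^ (1 / s) * D ^ (1 / s)) with hM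
    have hMt : M < ⊤ := by
      rw [hM]
      refine ENNReal.mul_lt_top ?_ (ENNReal.mul_lt_top ?_ ?_)
      · rw [show (1 / t - 1 / s : ℝ) = -(-(1 / t - 1 / s)) by ring, ENNReal.rpow_neg]
        exact ENNReal.inv_lt_top.2 (ENNReal.rpow_pos (pos_iff_ne_zero.2 hV0) hVt)
      · exact ENNReal.rpow_lt_top_of_nonneg (by positivity) hVt
      · exact ENNReal.rpow_lt_top_of_nonneg (by positivity) hDt
    refine lt_of_le_of_lt ?_ hMt
    refine iSup_le fun a => iSup_le fun R => iSup_le fun hR => ?_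
    -- rewrite the integrand
    have hint : ∀ x : EuclideanSpace ℝ (Fin n),
        ENNReal.ofReal (|rieszKernel n α x| ^ s) = ENNReal.ofReal (‖x‖ ^ p) := by
      intro x
      rw [rieszKernel, abs_of_nonneg (Real.rpow_nonneg (norm_nonneg x) _),
        ← Real.rpow_mul (norm_nonneg x)]
    have hA := lintegral_rpow_ball_aux n hn p hp hnp a hR
    rw [← hG, ← hV, ← hD] at hA
    have hRn0 : ENNReal.ofReal (R ^ n) ≠ 0 := by
      simp only [ne_eq, ENNReal.ofReal_eq_zero, not_le]
      positivity
    have hRnp0 : ENNReal.ofReal (R ^ ((n : ℝ) + p)) ≠ 0 := by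
      simp only [ne_eq, ENNReal.ofReal_eq_zero, not_le]
      positivity
    have hexp : (n : ℝ) * (1 / t - 1 / s) + ((n : ℝ) + p) * (1 / s) = 0 := by
      rw [hp_def, ht]
      field_simp
      ring
    calc volume (ball a R) ^ (1 / t - 1 / s) *
          (∫⁻ x in ball a R, ENNReal.ofReal (|rieszKernel n α x| ^ s)) ^ (1 / s)
        = volume (ball a R) ^ (1 / t - 1 / s) *
          (∫⁻ x in ball a R, ENNReal.ofReal (‖x‖ ^ p)) ^ (1 / s) := by
          congr 1
          refine congrArg (· ^ (1 / s)) ?_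
          exact lintegral_congr fun x => by rw [hint x]
      _ ≤ volume (ball a R) ^ (1 / t - 1 / s) *
          (V * ENNReal.ofReal (R ^ ((n : ℝ) + p)) * D) ^ (1 / s) :=
          mul_le_mul_right (ENNReal.rpow_le_rpow hA (by positivity)) _
      _ = (ENNReal.ofReal (R ^ n) ^ (1 / t - 1 / s) * V ^ (1 / t - 1 / s)) *
          (V ^ (1 / s) * ENNReal.ofReal (R ^ ((n : ℝ) + p)) ^ (1 / s) * D ^ (1 / s)) := by
          rw [volume_ball_eq_aux n hn a hR.le, ← hV,
            ENNReal.mul_rpow_of_ne_zero hRn0 hV0,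
            ENNReal.mul_rpow_of_ne_zero (mul_ne_zero hV0 hRnp0) hD0,
            ENNReal.mul_rpow_of_ne_zero hV0 hRnp0]
      _ = (ENNReal.ofReal (R ^ n) ^ (1 / t - 1 / s) *
            ENNReal.ofReal (R ^ ((n : ℝ) + p)) ^ (1 / s)) * M := by
          rw [hM]; ring
      _ = M := by
          rw [ENNReal.ofReal_rpow_of_pos (by positivity),
            ENNReal.ofReal_rpow_of_pos (by positivity),
            ← ENNReal.ofReal_mul (by positivity),
            ← Real.rpow_natCast R n, ← Real.rpow_mul hR.le, ← Real.rpow_mul hR.le,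
            ← Real.rpow_add hR, hexp, Real.rpow_zero, ENNReal.ofReal_one, one_mul]
end

section
/- Let n ≥ 1 be an integer, 0 < α < n and γ > 0. Then the Bessel-Riesz kernel K_{α,γ}(x) = |x|^{α−n}/(1+|x|)^γ belongs to the Lebesgue space L^t(ℝⁿ) for every t with n/(n+γ−α) < t < n/(n−α); that is, ∫_{ℝⁿ} (|x|^{α−n}/(1+|x|)^γ)^t dx < ∞ for such t. -/
open MeasureTheory Metric
open scoped ENNReal NNReal

open Set Module in
lemma aux_ball_rpow (n : ℕ) (p : ℝ) (hp0 : p < 0) (hpn : -(n : ℝ) < p) :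
    ∫⁻ x : EuclideanSpace ℝ (Fin n) in ball 0 1, ENNReal.ofReal (‖x‖ ^ p) < ⊤ := by
  have h_meas : Measurable fun x : EuclideanSpace ℝ (Fin n) => ‖x‖ ^ p := by fun_prop
  have h_pos : ∀ x : EuclideanSpace ℝ (Fin n), 0 ≤ ‖x‖ ^ p := fun x =>
    Real.rpow_nonneg (norm_nonneg x) p
  rw [lintegral_eq_lintegral_meas_le _ (Filter.Eventually.of_forall h_pos) h_meas.aemeasurable]
  set ν := volume.restrict (ball (0 : EuclideanSpace ℝ (Fin n)) 1) with hν
  set mB := volume (ball (0 : EuclideanSpace ℝ (Fin n)) 1) with hmBdef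
  have hmB : mB ≠ ⊤ := measure_ball_lt_top.ne
  have hq : (n : ℝ) * p⁻¹ < -1 := by
    rw [← div_eq_mul_inv, div_lt_iff_of_neg hp0]
    linarith
  calc
    ∫⁻ t in Ioi 0, ν {a | t ≤ ‖a‖ ^ p}
        ≤ ∫⁻ t in Ioc 0 1 ∪ Ioi 1, ν {a | t ≤ ‖a‖ ^ p} :=
      lintegral_mono_set Ioi_subset_Ioc_union_Ioi
    _ ≤ (∫⁻ t in Ioc 0 1, ν {a | t ≤ ‖a‖ ^ p}) + ∫⁻ t in Ioi 1, ν {a | t ≤ ‖a‖ ^ p} :=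
      lintegral_union_le _ _ _
    _ < ⊤ := ENNReal.add_lt_top.2 ⟨?_, ?_⟩
  · calc
      ∫⁻ t in Ioc 0 1, ν {a | t ≤ ‖a‖ ^ p} ≤ ∫⁻ _ in Ioc (0:ℝ) 1, mB :=
        setLIntegral_mono' measurableSet_Ioc fun t _ =>
          le_trans (measure_mono (subset_univ _))
            (by rw [hν, Measure.restrict_apply_univ])
      _ < ⊤ := by
        rw [setLIntegral_const]
        exact ENNReal.mul_lt_top measure_ball_lt_top (by simp [Real.volume_Ioc])
  · have key : ∀ t ∈ Ioi (1 : ℝ),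
        ν {a | t ≤ ‖a‖ ^ p} ≤ ENNReal.ofReal (t ^ ((n : ℝ) * p⁻¹)) * mB := by
      intro t ht
      have ht0 : (0 : ℝ) < t := lt_trans one_pos ht
      have hsub : {a : EuclideanSpace ℝ (Fin n) | t ≤ ‖a‖ ^ p} ⊆
          closedBall 0 (t ^ p⁻¹) := by
        intro a ha
        simp only [mem_setOf_eq] at ha
        have hna : 0 < ‖a‖ := by
          rcases eq_or_lt_of_le (norm_nonneg a) with h | h
          · exfalso
            rw [← h, Real.zero_rpow hp0.ne] at ha
            linarith
          · exact h
        have : (‖a‖ ^ p) ^ p⁻¹ ≤ t ^ p⁻¹ :=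
          Real.rpow_le_rpow_of_nonpos ht0 ha (inv_nonpos.mpr hp0.le)
        rw [Real.rpow_rpow_inv (norm_nonneg a) hp0.ne] at this
        simpa [mem_closedBall_zero_iff] using this
      calc
        ν {a | t ≤ ‖a‖ ^ p} ≤ volume {a : EuclideanSpace ℝ (Fin n) | t ≤ ‖a‖ ^ p} :=
          Measure.restrict_apply_le _ _
        _ ≤ volume (closedBall (0 : EuclideanSpace ℝ (Fin n)) (t ^ p⁻¹)) :=
          measure_mono hsub
        _ = ENNReal.ofReal (t ^ ((n : ℝ) * p⁻¹)) * mB := by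
          rw [Measure.addHaar_closedBall _ _ (by positivity : (0:ℝ) ≤ t ^ p⁻¹),
            finrank_euclideanSpace_fin, ← Real.rpow_natCast (t ^ p⁻¹) n,
            ← Real.rpow_mul ht0.le, mul_comm p⁻¹ (n : ℝ)]
    calc
      ∫⁻ t in Ioi 1, ν {a | t ≤ ‖a‖ ^ p}
          ≤ ∫⁻ t in Ioi 1, ENNReal.ofReal (t ^ ((n : ℝ) * p⁻¹)) * mB :=
        setLIntegral_mono' measurableSet_Ioi key
      _ = (∫⁻ t in Ioi 1, ENNReal.ofReal (t ^ ((n : ℝ) * p⁻¹))) * mB :=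
        lintegral_mul_const' mB _ hmB
      _ < ⊤ := ENNReal.mul_lt_top
          ((integrableOn_Ioi_rpow_of_lt hq one_pos).setLIntegral_lt_top)
          measure_ball_lt_top

open Set Module in
/-- For `n ≥ 1`, `0 < α < n`, `γ > 0`, the Bessel-Riesz kernel `K_{α,γ}`
belongs to `L^t(ℝⁿ)` for every `n/(n+γ-α) < t < n/(n-α)`:
`∫_{ℝⁿ} (|x|^{α-n}/(1+|x|)^γ)^t dx < ∞`. -/
theorem besselRieszKernel_mem_Lt (n : ℕ) (hn : 1 ≤ n) (α γ t : ℝ)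
    (hα0 : 0 < α) (hαn : α < n) (hγ : 0 < γ)
    (ht1 : (n : ℝ) / (n + γ - α) < t) (ht2 : t < n / (n - α)) :
    ∫⁻ x : EuclideanSpace ℝ (Fin n),
      ENNReal.ofReal (besselRieszKernel n α γ x ^ t) < ⊤ := by
  have hn1 : (1 : ℝ) ≤ n := by exact_mod_cast hn
  have hden : 0 < (n : ℝ) + γ - α := by linarith
  have ht0 : 0 < t := lt_trans (div_pos (by linarith) hden) ht1
  have hK : ∀ x : EuclideanSpace ℝ (Fin n), 0 ≤ besselRieszKernel n α γ x := fun x =>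
    div_nonneg (Real.rpow_nonneg (norm_nonneg x) _)
      (Real.rpow_nonneg (by linarith [norm_nonneg x]) _)
  rw [← lintegral_add_compl (fun x => ENNReal.ofReal (besselRieszKernel n α γ x ^ t))
    (measurableSet_ball : MeasurableSet (ball (0 : EuclideanSpace ℝ (Fin n)) 1))]
  refine ENNReal.add_lt_top.2 ⟨?_, ?_⟩
  · -- near the origin
    have hp0 : (α - n) * t < 0 := mul_neg_of_neg_of_pos (by linarith) ht0
    have hpn : -(n : ℝ) < (α - n) * t := by
      have := (lt_div_iff₀ (by linarith : (0:ℝ) < (n : ℝ) - α)).mp ht2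
      nlinarith
    refine lt_of_le_of_lt (setLIntegral_mono' measurableSet_ball fun x _ => ?_)
      (aux_ball_rpow n ((α - n) * t) hp0 hpn)
    apply ENNReal.ofReal_le_ofReal
    have h1 : besselRieszKernel n α γ x ≤ ‖x‖ ^ (α - (n : ℝ)) :=
      div_le_self (Real.rpow_nonneg (norm_nonneg x) _)
        (Real.one_le_rpow (by linarith [norm_nonneg x]) hγ.le)
    calc besselRieszKernel n α γ x ^ t ≤ (‖x‖ ^ (α - (n : ℝ))) ^ t :=
          Real.rpow_le_rpow (hK x) h1 ht0.le
      _ = ‖x‖ ^ ((α - (n : ℝ)) * t) := by rw [← Real.rpow_mul (norm_nonneg x)]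
  · -- away from the origin
    set r : ℝ := ((n : ℝ) + γ - α) * t with hrdef
    have hr : (finrank ℝ (EuclideanSpace ℝ (Fin n)) : ℝ) < r := by
      rw [finrank_euclideanSpace_fin]
      have := (div_lt_iff₀ hden).mp ht1
      nlinarith
    set C : ℝ := (2 : ℝ) ^ (((n : ℝ) - α) * t) with hCdef
    have hC0 : 0 ≤ C := Real.rpow_nonneg (by norm_num) _
    have hbd : ∀ x ∈ (ball (0 : EuclideanSpace ℝ (Fin n)) 1)ᶜ,
        ENNReal.ofReal (besselRieszKernel n α γ x ^ t) ≤
          ENNReal.ofReal (C * (1 + ‖x‖) ^ (-r)) := by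
      intro x hx
      have hx1 : (1 : ℝ) ≤ ‖x‖ := by
        simpa [mem_ball, dist_zero_right, not_lt] using hx
      apply ENNReal.ofReal_le_ofReal
      have hpos : (0 : ℝ) < (1 + ‖x‖) := by linarith
      have h2 : ‖x‖ ^ (α - (n : ℝ)) ≤ ((1 + ‖x‖) / 2) ^ (α - (n : ℝ)) :=
        Real.rpow_le_rpow_of_nonpos (by linarith) (by linarith) (by linarith)
      have h3 : ((1 + ‖x‖) / 2) ^ (α - (n : ℝ)) =
          (2 : ℝ) ^ ((n : ℝ) - α) * (1 + ‖x‖) ^ (α - (n : ℝ)) := by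
        rw [Real.div_rpow hpos.le (by norm_num), div_eq_mul_inv,
          ← Real.rpow_neg (by norm_num : (0:ℝ) ≤ 2), neg_sub, mul_comm]
      have h4 : besselRieszKernel n α γ x ≤
          (2 : ℝ) ^ ((n : ℝ) - α) * (1 + ‖x‖) ^ (α - (n : ℝ) - γ) := by
        have : besselRieszKernel n α γ x ≤
            ((2 : ℝ) ^ ((n : ℝ) - α) * (1 + ‖x‖) ^ (α - (n : ℝ))) / (1 + ‖x‖) ^ γ := by
          unfold besselRieszKernel
          gcongr
          exact h2.trans (le_of_eq h3)
        rw [mul_div_assoc, ← Real.rpow_sub hpos] at this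
        exact this
      calc besselRieszKernel n α γ x ^ t
          ≤ ((2 : ℝ) ^ ((n : ℝ) - α) * (1 + ‖x‖) ^ (α - (n : ℝ) - γ)) ^ t :=
            Real.rpow_le_rpow (hK x) h4 ht0.le
        _ = C * (1 + ‖x‖) ^ (-r) := by
            rw [Real.mul_rpow (Real.rpow_nonneg (by norm_num) _) (Real.rpow_nonneg hpos.le _),
              ← Real.rpow_mul (by norm_num : (0:ℝ) ≤ 2), ← Real.rpow_mul hpos.le, hCdef, hrdef]
            ring_nf
    calc ∫⁻ x in (ball (0 : EuclideanSpace ℝ (Fin n)) 1)ᶜ,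
          ENNReal.ofReal (besselRieszKernel n α γ x ^ t)
        ≤ ∫⁻ x in (ball (0 : EuclideanSpace ℝ (Fin n)) 1)ᶜ,
            ENNReal.ofReal (C * (1 + ‖x‖) ^ (-r)) :=
          setLIntegral_mono' measurableSet_ball.compl hbd
      _ ≤ ∫⁻ x : EuclideanSpace ℝ (Fin n), ENNReal.ofReal (C * (1 + ‖x‖) ^ (-r)) :=
          setLIntegral_le_lintegral _ _
      _ = ENNReal.ofReal C * ∫⁻ x : EuclideanSpace ℝ (Fin n),
            ENNReal.ofReal ((1 + ‖x‖) ^ (-r)) := by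
          simp_rw [ENNReal.ofReal_mul hC0]
          rw [lintegral_const_mul' _ _ ENNReal.ofReal_ne_top]
      _ < ⊤ := ENNReal.mul_lt_top ENNReal.ofReal_lt_top (finite_integral_one_add_norm hr)
end

section
/- Let n ≥ 1 be an integer, 0 < α < n and γ > 0. Suppose n/(n+γ−α) < t < n/(n−α), 1 ≤ p < t', and 1/q = 1/p − 1/t', where t' is the conjugate exponent of t. Then for every f ∈ L^p(ℝⁿ), the Bessel-Riesz operator satisfies ||I_{α,γ}f||_{L^q} ≤ ||K_{α,γ}||_{L^t} ||f||_{L^p}; in particular I_{α,γ} is bounded from L^p(ℝⁿ) to L^q(ℝⁿ) with operator norm at most ||K_{α,γ}||_{L^t}. -/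
open MeasureTheory Metric
open scoped ENNReal NNReal

/-- Young's convolution inequality for `ℝ≥0∞`-valued functions on `ℝⁿ`. -/
lemma young_ennreal {n : ℕ} (g h : EuclideanSpace ℝ (Fin n) → ℝ≥0∞)
    (hg : Measurable g) (hh : Measurable h) {t p q : ℝ}
    (ht : 1 ≤ t) (hp : 1 ≤ p) (hq : 0 < q)
    (habc : 1/t + 1/p - 1/q = 1)
    (hw1 : 0 ≤ 1/t - 1/q) (hw2 : 0 ≤ 1/p - 1/q) :
    (∫⁻ x, (∫⁻ y, g (x - y) * h y) ^ q) ^ (1/q) ≤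
      (∫⁻ x, g x ^ t) ^ (1/t) * (∫⁻ x, h x ^ p) ^ (1/p) := by
  have ht0 : (0:ℝ) < t := lt_of_lt_of_le one_pos ht
  have hp0 : (0:ℝ) < p := lt_of_lt_of_le one_pos hp
  have hq' : (0:ℝ) ≤ 1/q := by positivity
  set G : ℝ≥0∞ := ∫⁻ x, g x ^ t with hG
  set H : ℝ≥0∞ := ∫⁻ x, h x ^ p with hH
  have hgt : Measurable fun x => g x ^ t := hg.pow_const t
  have hhp : Measurable fun y => h y ^ p := hh.pow_const p
  -- pointwise splitting of a factor
  have hsplit : ∀ (A : ℝ≥0∞) (r : ℝ), 0 < r → 0 ≤ 1/r - 1/q →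
      A = (A ^ r) ^ (1/q) * (A ^ r) ^ (1/r - 1/q) := by
    intro A r hr hw
    rw [← ENNReal.rpow_mul, ← ENNReal.rpow_mul,
      ← ENNReal.rpow_add_of_nonneg _ _ (by positivity) (mul_nonneg hr.le hw)]
    rw [show r * (1/q) + r * (1/r - 1/q) = 1 by field_simp; ring]
    exact (ENNReal.rpow_one A).symm
  -- Step A: Hölder with three factors, for each x
  have stepA : ∀ x, (∫⁻ y, g (x - y) * h y) ≤
      (∫⁻ y, g (x - y) ^ t * h y ^ p) ^ (1/q) *
        (G ^ (1/t - 1/q) * H ^ (1/p - 1/q)) := by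
    intro x
    have hgx : Measurable fun y => g (x - y) := hg.comp (measurable_const.sub measurable_id)
    have key := ENNReal.lintegral_prod_norm_pow_le (μ := (volume : Measure (EuclideanSpace ℝ (Fin n))))
      (Finset.univ : Finset (Fin 3))
      (f := ![fun y => g (x - y) ^ t * h y ^ p, fun y => g (x - y) ^ t, fun y => h y ^ p])
      (p := ![1/q, 1/t - 1/q, 1/p - 1/q])
      (fun i _ => by
        fin_cases i
        · exact ((hgx.pow_const t).mul hhp).aemeasurable
        · exact (hgx.pow_const t).aemeasurable
        · exact hhp.aemeasurable)
      (by
        simp only [Fin.sum_univ_three, Matrix.cons_val_zero, Matrix.cons_val_one,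
          Matrix.head_cons, Matrix.cons_val_two, Matrix.tail_cons]
        linarith)
      (fun i _ => by
        fin_cases i
        · simpa using hq'
        · simpa using hw1
        · simpa using hw2)
    simp only [Fin.prod_univ_three, Matrix.cons_val_zero, Matrix.cons_val_one, Matrix.head_cons,
      Matrix.cons_val_two, Matrix.tail_cons] at key
    have heq : ∀ y, g (x - y) * h y =
        (g (x - y) ^ t * h y ^ p) ^ (1/q) * (g (x - y) ^ t) ^ (1/t - 1/q) *
          (h y ^ p) ^ (1/p - 1/q) := by
      intro y
      rw [ENNReal.mul_rpow_of_nonneg _ _ hq']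
      calc g (x - y) * h y
          = ((g (x-y) ^ t) ^ (1/q) * (g (x-y) ^ t) ^ (1/t - 1/q)) *
            ((h y ^ p) ^ (1/q) * (h y ^ p) ^ (1/p - 1/q)) := by
            rw [← hsplit (g (x-y)) t ht0 hw1, ← hsplit (h y) p hp0 hw2]
        _ = _ := by ring
    calc (∫⁻ y, g (x - y) * h y)
        = ∫⁻ y, (g (x - y) ^ t * h y ^ p) ^ (1/q) * (g (x - y) ^ t) ^ (1/t - 1/q) *
            (h y ^ p) ^ (1/p - 1/q) := by
          exact lintegral_congr heq
      _ ≤ (∫⁻ y, g (x - y) ^ t * h y ^ p) ^ (1/q) * (∫⁻ y, g (x - y) ^ t) ^ (1/t - 1/q) *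
            (∫⁻ y, h y ^ p) ^ (1/p - 1/q) := key
      _ = (∫⁻ y, g (x - y) ^ t * h y ^ p) ^ (1/q) * (G ^ (1/t - 1/q) * H ^ (1/p - 1/q)) := by
          rw [(MeasureTheory.Measure.measurePreserving_sub_left volume x).lintegral_comp hgt]
          ring
  -- Step B: raise to the power q and integrate
  have hinner : Measurable fun x => ∫⁻ y, g (x - y) ^ t * h y ^ p := by
    apply Measurable.lintegral_prod_right'
      (f := fun z : EuclideanSpace ℝ (Fin n) × EuclideanSpace ℝ (Fin n) =>
        g (z.1 - z.2) ^ t * h z.2 ^ p)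
    exact ((hg.comp (measurable_fst.sub measurable_snd)).pow_const t).mul
      (hhp.comp measurable_snd)
  have hqne : q ≠ 0 := hq.ne'
  have stepB : (∫⁻ x, (∫⁻ y, g (x - y) * h y) ^ q) ≤
      (G * H) * ((G ^ (1/t - 1/q) * H ^ (1/p - 1/q)) ^ q) := by
    calc (∫⁻ x, (∫⁻ y, g (x - y) * h y) ^ q)
        ≤ ∫⁻ x, (∫⁻ y, g (x - y) ^ t * h y ^ p) *
            ((G ^ (1/t - 1/q) * H ^ (1/p - 1/q)) ^ q) := by
          apply lintegral_mono
          intro x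
          calc (∫⁻ y, g (x - y) * h y) ^ q
              ≤ ((∫⁻ y, g (x - y) ^ t * h y ^ p) ^ (1/q) *
                  (G ^ (1/t - 1/q) * H ^ (1/p - 1/q))) ^ q :=
                ENNReal.rpow_le_rpow (stepA x) hq.le
            _ = _ := by
                rw [ENNReal.mul_rpow_of_nonneg _ _ hq.le, ← ENNReal.rpow_mul,
                  one_div_mul_cancel hqne, ENNReal.rpow_one]
      _ = (∫⁻ x, ∫⁻ y, g (x - y) ^ t * h y ^ p) *
            ((G ^ (1/t - 1/q) * H ^ (1/p - 1/q)) ^ q) :=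
          lintegral_mul_const _ hinner
      _ = (G * H) * ((G ^ (1/t - 1/q) * H ^ (1/p - 1/q)) ^ q) := by
          congr 1
          rw [lintegral_lintegral_swap
            (((hg.comp (measurable_fst.sub measurable_snd)).pow_const t).mul
              (hhp.comp measurable_snd)).aemeasurable]
          calc (∫⁻ y, ∫⁻ x, g (x - y) ^ t * h y ^ p)
              = ∫⁻ y, G * h y ^ p := by
                apply lintegral_congr
                intro y
                have hgy : Measurable fun x : EuclideanSpace ℝ (Fin n) => g (x - y) ^ t :=
                  (hg.comp (measurable_id.sub measurable_const)).pow_const t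
                rw [lintegral_mul_const _ hgy]
                rw [show (∫⁻ x, g (x - y) ^ t) = G from lintegral_sub_right_eq_self (fun x => g x ^ t) y]
            _ = G * H := lintegral_const_mul G hhp
  -- Step D: combine exponents
  have stepD : (G * H) * ((G ^ (1/t - 1/q) * H ^ (1/p - 1/q)) ^ q) =
      G ^ (q * (1/t)) * H ^ (q * (1/p)) := by
    rw [ENNReal.mul_rpow_of_nonneg _ _ hq.le, ← ENNReal.rpow_mul, ← ENNReal.rpow_mul]
    have e1 : G * G ^ ((1/t - 1/q) * q) = G ^ (q * (1/t)) := by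
      conv_lhs => rw [show G * G ^ ((1/t - 1/q) * q) = G ^ (1:ℝ) * G ^ ((1/t - 1/q) * q) by
        rw [ENNReal.rpow_one]]
      rw [← ENNReal.rpow_add_of_nonneg _ _ zero_le_one (mul_nonneg hw1 hq.le)]
      congr 1
      field_simp
      ring
    have e2 : H * H ^ ((1/p - 1/q) * q) = H ^ (q * (1/p)) := by
      conv_lhs => rw [show H * H ^ ((1/p - 1/q) * q) = H ^ (1:ℝ) * H ^ ((1/p - 1/q) * q) by
        rw [ENNReal.rpow_one]]
      rw [← ENNReal.rpow_add_of_nonneg _ _ zero_le_one (mul_nonneg hw2 hq.le)]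
      congr 1
      field_simp
      ring
    calc (G * H) * (G ^ ((1/t - 1/q) * q) * H ^ ((1/p - 1/q) * q))
        = (G * G ^ ((1/t - 1/q) * q)) * (H * H ^ ((1/p - 1/q) * q)) := by ring
      _ = _ := by rw [e1, e2]
  -- conclude
  calc (∫⁻ x, (∫⁻ y, g (x - y) * h y) ^ q) ^ (1/q)
      ≤ (G ^ (q * (1/t)) * H ^ (q * (1/p))) ^ (1/q) := by
        apply ENNReal.rpow_le_rpow _ hq'
        rw [← stepD]; exact stepB
    _ = G ^ (1/t) * H ^ (1/p) := by
        rw [ENNReal.mul_rpow_of_nonneg _ _ hq', ← ENNReal.rpow_mul, ← ENNReal.rpow_mul]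
        rw [show q * (1/t) * (1/q) = 1/t by field_simp,
          show q * (1/p) * (1/q) = 1/p by field_simp]

/-- Young's inequality for the Bessel-Riesz operator: for `n ≥ 1`,
`0 < α < n`, `γ > 0`, `n/(n+γ-α) < t < n/(n-α)`, `1 ≤ p < t'`, `1/q = 1/p - 1/t'`
(where `1/t + 1/t' = 1`), one has
`‖I_{α,γ} f‖_{L^q} ≤ ‖K_{α,γ}‖_{L^t} ‖f‖_{L^p}` for every `f ∈ L^p(ℝⁿ)`. -/
theorem besselRiesz_young (n : ℕ) (hn : 1 ≤ n) (α γ t t' p q : ℝ)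
    (hα0 : 0 < α) (hαn : α < n) (hγ : 0 < γ)
    (ht1 : (n : ℝ) / (n + γ - α) < t) (ht2 : t < n / (n - α))
    (ht' : 1 / t + 1 / t' = 1) (hp1 : 1 ≤ p) (hpt : p < t')
    (hq : 1 / q = 1 / p - 1 / t') :
    ∀ f : EuclideanSpace ℝ (Fin n) → ℝ, Measurable f →
      eLpNorm f (ENNReal.ofReal p) volume ≠ ⊤ →
      eLpNorm (besselRiesz n α γ f) (ENNReal.ofReal q) volume ≤
        eLpNorm (besselRieszKernel n α γ) (ENNReal.ofReal t) volume *
          eLpNorm f (ENNReal.ofReal p) volume := by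
  intro f hf _
  have hK : Measurable (besselRieszKernel n α γ) := by
    unfold besselRieszKernel; fun_prop
  have ht'1 : (1:ℝ) < t' := lt_of_le_of_lt hp1 hpt
  have ht'0 : (0:ℝ) < t' := lt_trans one_pos ht'1
  have hp0 : (0:ℝ) < p := lt_of_lt_of_le one_pos hp1
  have h1t'lt : 1/t' < 1 := by rw [div_lt_one ht'0]; exact ht'1
  have h1t'pos : 0 < 1/t' := by positivity
  have h1tpos : 0 < 1/t := by linarith
  have htpos : (0:ℝ) < t := one_div_pos.mp h1tpos
  have ht1' : (1:ℝ) ≤ t := (div_le_one htpos).mp (by linarith)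
  have h1 : 1/t' < 1/p := one_div_lt_one_div_of_lt hp0 hpt
  have h1qpos : 0 < 1/q := by rw [hq]; linarith
  have hqpos : (0:ℝ) < q := one_div_pos.mp h1qpos
  have habc : 1/t + 1/p - 1/q = 1 := by rw [hq]; linarith
  have hp_le : 1/p ≤ 1 := by rw [div_le_one hp0]; exact hp1
  have hw1 : 0 ≤ 1/t - 1/q := by rw [hq]; linarith
  have hw2 : 0 ≤ 1/p - 1/q := by rw [hq]; linarith
  have hg : Measurable fun x => (‖besselRieszKernel n α γ x‖₊ : ℝ≥0∞) :=
    hK.nnnorm.coe_nnreal_ennreal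
  have hh : Measurable fun y => (‖f y‖₊ : ℝ≥0∞) := hf.nnnorm.coe_nnreal_ennreal
  have key := young_ennreal _ _ hg hh ht1' hp1 hqpos habc hw1 hw2
  rw [eLpNorm_eq_lintegral_rpow_enorm_toReal (ne_of_gt (ENNReal.ofReal_pos.mpr hqpos))
      ENNReal.ofReal_ne_top,
    eLpNorm_eq_lintegral_rpow_enorm_toReal (ne_of_gt (ENNReal.ofReal_pos.mpr htpos))
      ENNReal.ofReal_ne_top,
    eLpNorm_eq_lintegral_rpow_enorm_toReal (ne_of_gt (ENNReal.ofReal_pos.mpr hp0))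
      ENNReal.ofReal_ne_top]
  simp only [ENNReal.toReal_ofReal hqpos.le, ENNReal.toReal_ofReal htpos.le,
    ENNReal.toReal_ofReal hp0.le]
  refine le_trans ?_ key
  apply ENNReal.rpow_le_rpow ?_ h1qpos.le
  apply lintegral_mono
  intro x
  apply ENNReal.rpow_le_rpow ?_ hqpos.le
  calc (‖besselRiesz n α γ f x‖₊ : ℝ≥0∞)
      ≤ ∫⁻ y, ‖besselRieszKernel n α γ (x - y) * f y‖₊ := by
        rw [besselRiesz]
        exact enorm_integral_le_lintegral_enorm _
    _ = ∫⁻ y, (‖besselRieszKernel n α γ (x - y)‖₊ : ℝ≥0∞) * (‖f y‖₊ : ℝ≥0∞) := by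
        apply lintegral_congr; intro y; rw [nnnorm_mul, ENNReal.coe_mul]
end

section
/- Let n ≥ 1 be an integer, 0 < α < n, γ ≥ 0, and 1 ≤ s ≤ t < ∞ with ||K_{α,γ}||_{L^{s,t}} < ∞. Then there exists a constant C > 0, depending only on n and s, such that for every x ∈ ℝⁿ with x ≠ 0, K_{α,γ}(x) ≤ C |x|^{−n/t} ||K_{α,γ}||_{L^{s,t}}. -/
open MeasureTheory Metric
open scoped ENNReal NNReal

/-- if `1 ≤ s ≤ t < ∞` and `‖K_{α,γ}‖_{L^{s,t}} < ∞`, then there is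
`C > 0` depending only on `n` and `s` such that
`K_{α,γ}(x) ≤ C |x|^{-n/t} ‖K_{α,γ}‖_{L^{s,t}}` for every `x ≠ 0`. -/
theorem besselRieszKernel_pointwise_bound (n : ℕ) (hn : 1 ≤ n) (α γ s t : ℝ)
    (hα0 : 0 < α) (hαn : α < n) (hγ : 0 ≤ γ)
    (hs : 1 ≤ s) (hst : s ≤ t)
    (hK : morreyNorm n s t (besselRieszKernel n α γ) < ⊤) :
    ∃ C : ℝ, 0 < C ∧ ∀ x : EuclideanSpace ℝ (Fin n), x ≠ 0 →
      ENNReal.ofReal (besselRieszKernel n α γ x) ≤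
        ENNReal.ofReal (C * ‖x‖ ^ (-((n : ℝ) / t))) *
          morreyNorm n s t (besselRieszKernel n α γ) := by
  classical
  haveI : Nonempty (Fin n) := Fin.pos_iff_nonempty.mp hn
  haveI : Nontrivial (EuclideanSpace ℝ (Fin n)) := inferInstance
  have hs0 : (0:ℝ) < s := lt_of_lt_of_le one_pos hs
  have ht0 : (0:ℝ) < t := lt_of_lt_of_le hs0 hst
  set K := besselRieszKernel n α γ with hKdef
  set M := morreyNorm n s t K with hMdef
  set v1 : ℝ≥0∞ := volume (ball (0 : EuclideanSpace ℝ (Fin n)) 1) with hv1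
  have hv1pos : 0 < v1 := measure_ball_pos _ _ one_pos
  have hv1top : v1 ≠ ⊤ := measure_ball_lt_top.ne
  set c : ℝ := v1.toReal with hcdef
  have hcpos : 0 < c := ENNReal.toReal_pos hv1pos.ne' hv1top
  have hv1c : v1 = ENNReal.ofReal c := (ENNReal.ofReal_toReal hv1top).symm
  refine ⟨max 1 (c ^ (-(1/s))), lt_of_lt_of_le one_pos (le_max_left _ _), ?_⟩
  intro x hx
  set R : ℝ := ‖x‖ with hRdef
  have hR : 0 < R := norm_pos_iff.mpr hx
  have hKpos : ∀ y : EuclideanSpace ℝ (Fin n), y ≠ 0 → 0 < K y := by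
    intro y hy
    have : (0:ℝ) < ‖y‖ := norm_pos_iff.mpr hy
    exact div_pos (Real.rpow_pos_of_pos this _)
      (Real.rpow_pos_of_pos (by positivity) _)
  have hKxpos : 0 < K x := hKpos x hx
  have hmono : ∀ y : EuclideanSpace ℝ (Fin n), y ≠ 0 → ‖y‖ < R → K x ≤ K y := by
    intro y hy hyR
    have hy0 : (0:ℝ) < ‖y‖ := norm_pos_iff.mpr hy
    have h1 : R ^ (α - (n:ℝ)) ≤ ‖y‖ ^ (α - (n:ℝ)) :=
      Real.rpow_le_rpow_of_nonpos hy0 hyR.le (by linarith)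
    have h2 : (1 + ‖y‖) ^ γ ≤ (1 + R) ^ γ :=
      Real.rpow_le_rpow (by positivity) (by linarith) hγ
    exact div_le_div₀ (le_of_lt (Real.rpow_pos_of_pos hy0 _)) h1
      (Real.rpow_pos_of_pos (by positivity) _) h2
  set v : ℝ≥0∞ := volume (ball (0 : EuclideanSpace ℝ (Fin n)) R) with hv
  have hvball : v = ENNReal.ofReal (R ^ n) * v1 := by
    rw [hv, hv1, Measure.addHaar_ball volume _ hR.le, finrank_euclideanSpace_fin]
  have hvpos : 0 < v := measure_ball_pos _ _ hR
  have hvtop : v ≠ ⊤ := measure_ball_lt_top.ne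
  -- lower bound for the integral
  have hint : ENNReal.ofReal (K x ^ s) * v ≤
      ∫⁻ y in ball (0 : EuclideanSpace ℝ (Fin n)) R, ENNReal.ofReal (|K y| ^ s) := by
    have hsub : ∫⁻ y in ball (0 : EuclideanSpace ℝ (Fin n)) R \ {0},
        ENNReal.ofReal (|K y| ^ s) ≤
        ∫⁻ y in ball (0 : EuclideanSpace ℝ (Fin n)) R, ENNReal.ofReal (|K y| ^ s) :=
      lintegral_mono_set Set.diff_subset
    refine le_trans ?_ hsub
    have hmeas : MeasurableSet (ball (0 : EuclideanSpace ℝ (Fin n)) R \ {0}) :=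
      measurableSet_ball.diff (measurableSet_singleton 0)
    have hconst : ∫⁻ _ in ball (0 : EuclideanSpace ℝ (Fin n)) R \ {0},
        ENNReal.ofReal (K x ^ s) = ENNReal.ofReal (K x ^ s) * v := by
      rw [setLIntegral_const, measure_diff_null (measure_singleton 0)]
    rw [← hconst]
    refine setLIntegral_mono' hmeas ?_
    rintro y ⟨hy1, hy2⟩
    have hy : y ≠ 0 := hy2
    have hKy : K x ≤ K y := hmono y hy (mem_ball_zero_iff.mp hy1)
    have : K x ^ s ≤ |K y| ^ s := by
      rw [abs_of_pos (hKpos y hy)]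
      exact Real.rpow_le_rpow hKxpos.le hKy hs0.le
    exact ENNReal.ofReal_le_ofReal this
  -- key inequality
  have hkey : ENNReal.ofReal (K x) * v ^ (1/t) ≤ M := by
    have hterm : v ^ (1/t - 1/s) *
        (∫⁻ y in ball (0 : EuclideanSpace ℝ (Fin n)) R,
          ENNReal.ofReal (|K y| ^ s)) ^ (1/s) ≤ M := by
      rw [hMdef, morreyNorm]
      refine le_iSup_of_le (0 : EuclideanSpace ℝ (Fin n)) ?_
      refine le_iSup_of_le R ?_
      exact le_iSup_of_le hR le_rfl
    refine le_trans ?_ hterm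
    have h1 : (ENNReal.ofReal (K x ^ s) * v) ^ (1/s) ≤
        (∫⁻ y in ball (0 : EuclideanSpace ℝ (Fin n)) R,
          ENNReal.ofReal (|K y| ^ s)) ^ (1/s) :=
      ENNReal.rpow_le_rpow hint (by positivity)
    calc ENNReal.ofReal (K x) * v ^ (1/t)
        = v ^ (1/t - 1/s) * ((ENNReal.ofReal (K x ^ s) * v) ^ (1/s)) := by
          rw [ENNReal.mul_rpow_of_ne_top ENNReal.ofReal_ne_top hvtop,
            ENNReal.ofReal_rpow_of_pos (Real.rpow_pos_of_pos hKxpos s),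
            ← Real.rpow_mul hKxpos.le, mul_one_div_cancel hs0.ne', Real.rpow_one]
          have hvv : v ^ (1/t) = v ^ (1/t - 1/s) * v ^ (1/s) := by
            rw [← ENNReal.rpow_add _ _ hvpos.ne' hvtop]
            congr 1
            ring
          rw [hvv]; ring
      _ ≤ _ := mul_le_mul_right h1 _
  -- extract the bound
  have hvt0 : v ^ (1/t) ≠ 0 := (ENNReal.rpow_pos hvpos hvtop).ne'
  have hvtt : v ^ (1/t) ≠ ⊤ := ENNReal.rpow_ne_top_of_nonneg (by positivity) hvtop
  have h2 : ENNReal.ofReal (K x) ≤ M * v ^ (-(1/t)) := by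
    have := (ENNReal.le_div_iff_mul_le (Or.inl hvt0) (Or.inl hvtt)).mpr hkey
    rwa [div_eq_mul_inv, ← ENNReal.rpow_neg] at this
  -- bound v ^ (-(1/t))
  have hvbound : v ^ (-(1/t)) ≤
      ENNReal.ofReal (max 1 (c ^ (-(1/s))) * R ^ (-((n:ℝ)/t))) := by
    rw [hvball, ENNReal.mul_rpow_of_ne_top ENNReal.ofReal_ne_top hv1top,
      ENNReal.ofReal_rpow_of_pos (pow_pos hR n), hv1c,
      ENNReal.ofReal_rpow_of_pos hcpos]
    have hRn : (R ^ n) ^ (-(1/t)) = R ^ (-((n:ℝ)/t)) := by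
      rw [← Real.rpow_natCast R n, ← Real.rpow_mul hR.le]
      ring_nf
    rw [hRn, ← ENNReal.ofReal_mul (by positivity)]
    apply ENNReal.ofReal_le_ofReal
    rw [mul_comm (max 1 (c ^ (-(1/s)))) _]
    apply mul_le_mul_of_nonneg_left _ (by positivity)
    rcases le_or_gt 1 c with hc1 | hc1
    · exact le_trans (Real.rpow_le_one_of_one_le_of_nonpos hc1 (neg_nonpos.mpr (by positivity))) (le_max_left _ _)
    · refine le_trans (Real.rpow_le_rpow_of_exponent_ge hcpos hc1.le ?_) (le_max_right _ _)
      have : 1/t ≤ 1/s := one_div_le_one_div_of_le hs0 hst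
      linarith
  calc ENNReal.ofReal (K x) ≤ M * v ^ (-(1/t)) := h2
    _ ≤ M * ENNReal.ofReal (max 1 (c ^ (-(1/s))) * R ^ (-((n:ℝ)/t))) :=
        mul_le_mul_right hvbound _
    _ = _ := mul_comm _ _
end

section
/- Let n ≥ 1 be an integer, 0 < α < n, γ ≥ 0, 1 ≤ p₁ < n/α, and let φ : (0,∞) → (0,∞) be of class G_{p₁}. Let 1 ≤ s < t = n/(n−α) with s < p₂ where 1/p₂ = 1/p₁ − 1/s', let t' be the conjugate exponent of t, and set ψ(r) := φ(r) r^{n/t'}. Then there exists a constant C > 0 such that for every f ∈ L^{p₁,φ}(ℝⁿ), every a ∈ ℝⁿ and R > 0, writing B = B(a,R) and f₁ := f·χ_{B(a,2R)}, one has ((1/|B|) ∫_B |I_{α,γ}f₁(x)|^{p₂} dx)^{1/p₂} ≤ C ψ(R) ||K_{α,γ}||_{L^{s,t}} ||f||_{L^{p₁,φ}}. -/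
open MeasureTheory Metric
open scoped ENNReal NNReal

private lemma lintegral_sub_left_eq_self' {n : ℕ} (f : EuclideanSpace ℝ (Fin n) → ℝ≥0∞)
    (hf : Measurable f) (g : EuclideanSpace ℝ (Fin n)) :
    ∫⁻ x, f (g - x) = ∫⁻ x, f x := by
  have h1 : ∀ x : EuclideanSpace ℝ (Fin n), g - x = -(x - g) := fun x => by abel
  simp_rw [h1]
  rw [lintegral_sub_right_eq_self (fun x => f (-x)) g]
  exact (Measure.measurePreserving_neg (volume : Measure (EuclideanSpace ℝ (Fin n)))).lintegral_comp hf

private lemma young_conv {n : ℕ} (F G : EuclideanSpace ℝ (Fin n) → ℝ≥0∞)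
    (hF : Measurable F) (hG : Measurable G) {p₁ p₂ s : ℝ}
    (hp₁ : 1 ≤ p₁) (hs : 1 ≤ s) (hsp₂ : s < p₂)
    (hp₂ : 1/p₂ = 1/p₁ + 1/s - 1) :
    ∫⁻ x, (∫⁻ y, F (x - y) * G y) ^ p₂ ≤
      (∫⁻ x, F x ^ s) ^ (p₂ / s) * (∫⁻ x, G x ^ p₁) ^ (p₂ / p₁) := by
  have hs0 : (0:ℝ) < s := lt_of_lt_of_le one_pos hs
  have hp₁0 : (0:ℝ) < p₁ := lt_of_lt_of_le one_pos hp₁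
  have hp₂0 : (0:ℝ) < p₂ := lt_trans hs0 hsp₂
  have hw1 : (0:ℝ) ≤ 1/p₂ := by positivity
  have hw2 : (0:ℝ) ≤ 1/s - 1/p₂ := by
    rw [sub_nonneg]; exact one_div_le_one_div_of_le hs0 hsp₂.le
  have hw3 : (0:ℝ) ≤ 1/p₁ - 1/p₂ := by
    rw [sub_nonneg, hp₂]
    have : 1/s ≤ 1 := by rw [div_le_one hs0]; exact hs
    linarith
  have hmeas2 : Measurable (Function.uncurry fun x y =>
      F (x - y) ^ s * G y ^ p₁ : EuclideanSpace ℝ (Fin n) × EuclideanSpace ℝ (Fin n) → ℝ≥0∞) :=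
    ((hF.comp (measurable_fst.sub measurable_snd)).pow_const s).mul
      ((hG.comp measurable_snd).pow_const p₁)
  have hinner : Measurable fun x => ∫⁻ y, F (x - y) ^ s * G y ^ p₁ :=
    Measurable.lintegral_prod_right hmeas2
  have step1 : ∀ x, (∫⁻ y, F (x - y) * G y) ≤
      (∫⁻ y, F (x - y) ^ s * G y ^ p₁) ^ (1/p₂) *
        ((∫⁻ z, F z ^ s) ^ (1/s - 1/p₂) * (∫⁻ z, G z ^ p₁) ^ (1/p₁ - 1/p₂)) := by
    intro x
    have hIFx : ∫⁻ y, F (x - y) ^ s = ∫⁻ z, F z ^ s :=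
      lintegral_sub_left_eq_self' (fun z => F z ^ s) (hF.pow_const s) x
    have key : ∀ A B : ℝ≥0∞,
        A * B = (A ^ s * B ^ p₁) ^ (1/p₂) * ((A ^ s) ^ (1/s - 1/p₂) * (B ^ p₁) ^ (1/p₁ - 1/p₂)) := by
      intro A B
      rw [ENNReal.mul_rpow_of_nonneg _ _ hw1, ← ENNReal.rpow_mul, ← ENNReal.rpow_mul,
        ← ENNReal.rpow_mul, ← ENNReal.rpow_mul]
      have h1 : s * (1/p₂) + s * (1/s - 1/p₂) = 1 := by field_simp; ring
      have h2 : p₁ * (1/p₂) + p₁ * (1/p₁ - 1/p₂) = 1 := by field_simp; ring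
      calc A * B = A ^ (s * (1/p₂) + s * (1/s - 1/p₂)) * B ^ (p₁ * (1/p₂) + p₁ * (1/p₁ - 1/p₂)) := by
            rw [h1, h2, ENNReal.rpow_one, ENNReal.rpow_one]
        _ = A ^ (s * (1/p₂)) * A ^ (s * (1/s - 1/p₂)) *
              (B ^ (p₁ * (1/p₂)) * B ^ (p₁ * (1/p₁ - 1/p₂))) := by
            rw [ENNReal.rpow_add_of_nonneg _ _ (by positivity) (by positivity),
              ENNReal.rpow_add_of_nonneg _ _ (by positivity) (by positivity)]
        _ = _ := by ring
    calc (∫⁻ y, F (x - y) * G y)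
        = ∫⁻ y, ∏ i : Fin 3, (![fun y => F (x - y) ^ s * G y ^ p₁,
            fun y => F (x - y) ^ s, fun y => G y ^ p₁] i y) ^
              (![1/p₂, 1/s - 1/p₂, 1/p₁ - 1/p₂] i) := by
          apply lintegral_congr; intro y
          simp only [Fin.prod_univ_three, Matrix.cons_val_zero, Matrix.cons_val_one,
            Matrix.head_cons, Matrix.cons_val_two, Matrix.tail_cons]
          simpa [mul_assoc] using key (F (x - y)) (G y)
      _ ≤ ∏ i : Fin 3, (∫⁻ y, ![fun y => F (x - y) ^ s * G y ^ p₁,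
            fun y => F (x - y) ^ s, fun y => G y ^ p₁] i y) ^
              (![1/p₂, 1/s - 1/p₂, 1/p₁ - 1/p₂] i) := by
          apply ENNReal.lintegral_prod_norm_pow_le
          · intro i _
            fin_cases i
            · exact (((hF.comp (measurable_const.sub measurable_id)).pow_const s).mul
                (hG.pow_const p₁)).aemeasurable
            · exact ((hF.comp (measurable_const.sub measurable_id)).pow_const s).aemeasurable
            · exact (hG.pow_const p₁).aemeasurable
          · show 1/p₂ + (1/s - 1/p₂ + (1/p₁ - 1/p₂ + 0)) = 1
            rw [hp₂]; ring
          · intro i _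
            fin_cases i
            · exact hw1
            · exact hw2
            · exact hw3
      _ = (∫⁻ y, F (x - y) ^ s * G y ^ p₁) ^ (1/p₂) *
            ((∫⁻ z, F z ^ s) ^ (1/s - 1/p₂) * (∫⁻ z, G z ^ p₁) ^ (1/p₁ - 1/p₂)) := by
          simp only [Fin.prod_univ_three, Matrix.cons_val_zero, Matrix.cons_val_one,
            Matrix.head_cons, Matrix.cons_val_two, Matrix.tail_cons]
          rw [hIFx, mul_assoc]
  -- integrate in x
  have step2 : ∫⁻ x, (∫⁻ y, F (x - y) * G y) ^ p₂ ≤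
      ((∫⁻ x, ∫⁻ y, F (x - y) ^ s * G y ^ p₁)) *
        (((∫⁻ z, F z ^ s) ^ (1/s - 1/p₂) * (∫⁻ z, G z ^ p₁) ^ (1/p₁ - 1/p₂)) ^ p₂) := by
    rw [← lintegral_mul_const'' _ hinner.aemeasurable]
    apply lintegral_mono
    intro x
    calc (∫⁻ y, F (x - y) * G y) ^ p₂
        ≤ ((∫⁻ y, F (x - y) ^ s * G y ^ p₁) ^ (1/p₂) *
            ((∫⁻ z, F z ^ s) ^ (1/s - 1/p₂) * (∫⁻ z, G z ^ p₁) ^ (1/p₁ - 1/p₂))) ^ p₂ :=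
          ENNReal.rpow_le_rpow (step1 x) hp₂0.le
      _ = (∫⁻ y, F (x - y) ^ s * G y ^ p₁) *
            (((∫⁻ z, F z ^ s) ^ (1/s - 1/p₂) * (∫⁻ z, G z ^ p₁) ^ (1/p₁ - 1/p₂)) ^ p₂) := by
          rw [ENNReal.mul_rpow_of_nonneg _ _ hp₂0.le, ← ENNReal.rpow_mul,
            one_div, inv_mul_cancel₀ hp₂0.ne', ENNReal.rpow_one]
  have step3 : (∫⁻ x, ∫⁻ y, F (x - y) ^ s * G y ^ p₁) =
      (∫⁻ z, F z ^ s) * (∫⁻ z, G z ^ p₁) := by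
    rw [lintegral_lintegral_swap hmeas2.aemeasurable]
    have : ∀ y, ∫⁻ x, F (x - y) ^ s * G y ^ p₁ =
        (∫⁻ z, F z ^ s) * G y ^ p₁ := by
      intro y
      have hm : Measurable fun x : EuclideanSpace ℝ (Fin n) => F (x - y) ^ s :=
        (hF.comp (measurable_id.sub measurable_const)).pow_const s
      rw [lintegral_mul_const _ hm]
      congr 1
      exact lintegral_sub_right_eq_self (fun z => F z ^ s) y
    simp_rw [this]
    rw [lintegral_const_mul _ (hG.pow_const p₁)]
  refine le_trans step2 ?_
  rw [step3]
  rw [ENNReal.mul_rpow_of_nonneg _ _ hp₂0.le, ← ENNReal.rpow_mul, ← ENNReal.rpow_mul]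
  have e1 : (1/s - 1/p₂) * p₂ + 1 = p₂ / s := by field_simp; ring
  have e2 : (1/p₁ - 1/p₂) * p₂ + 1 = p₂ / p₁ := by field_simp; ring
  calc (∫⁻ z, F z ^ s) * (∫⁻ z, G z ^ p₁) *
        ((∫⁻ z, F z ^ s) ^ ((1/s - 1/p₂) * p₂) * (∫⁻ z, G z ^ p₁) ^ ((1/p₁ - 1/p₂) * p₂))
      = ((∫⁻ z, F z ^ s) ^ ((1/s - 1/p₂) * p₂) * (∫⁻ z, F z ^ s) ^ (1:ℝ)) *
          ((∫⁻ z, G z ^ p₁) ^ ((1/p₁ - 1/p₂) * p₂) * (∫⁻ z, G z ^ p₁) ^ (1:ℝ)) := by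
        rw [ENNReal.rpow_one, ENNReal.rpow_one]; ring
    _ = (∫⁻ x, F x ^ s) ^ (p₂ / s) * (∫⁻ x, G x ^ p₁) ^ (p₂ / p₁) := by
        rw [← ENNReal.rpow_add_of_nonneg _ _ (by positivity) zero_le_one,
          ← ENNReal.rpow_add_of_nonneg _ _ (by positivity) zero_le_one, e1, e2]
    _ ≤ (∫⁻ x, F x ^ s) ^ (p₂ / s) * (∫⁻ x, G x ^ p₁) ^ (p₂ / p₁) := le_rfl


private lemma aux_rpow1 {R c0r : ℝ} (hR : 0 < R) (hc : 0 < c0r) (n : ℕ) (e : ℝ) :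
    (R ^ n * c0r) ^ e = R ^ ((n:ℝ) * e) * c0r ^ e := by
  rw [← Real.rpow_natCast R, Real.mul_rpow (by positivity) hc.le, ← Real.rpow_mul hR.le]

private lemma aux_rpow {R c0r b : ℝ} (hR : 0 < R) (hc : 0 < c0r) (hb : 0 < b) (n : ℕ) (e : ℝ) :
    ((b * R) ^ n * c0r) ^ e = b ^ ((n:ℝ) * e) * (R ^ ((n:ℝ) * e) * c0r ^ e) := by
  rw [mul_pow, ← Real.rpow_natCast b, ← Real.rpow_natCast R, mul_assoc,
    Real.mul_rpow (by positivity) (by positivity),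
    Real.mul_rpow (by positivity) hc.le,
    ← Real.rpow_mul hb.le, ← Real.rpow_mul hR.le]

private lemma key_real_ineq {R c0r φ2 φ1 Cd p₂ s t p₁ : ℝ} (n : ℕ) (hR : 0 < R) (hc : 0 < c0r)
    (hCd : 0 < Cd) (hφ : Cd * φ2 ≤ φ1) (hφ2nn : 0 ≤ φ2)
    (hsum : -(1/p₂) + (1/s - 1/t) + 1/p₁ = 1 - 1/t) :
    (R ^ n * c0r) ^ (-(1/p₂)) * ((3*R) ^ n * c0r) ^ (1/s - 1/t) * ((2*R) ^ n * c0r) ^ (1/p₁) * φ2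
      ≤ Cd⁻¹ * (3 ^ ((n:ℝ) * (1/s - 1/t)) * 2 ^ ((n:ℝ) * (1/p₁)) * c0r ^ ((1:ℝ) - 1/t)) *
        (φ1 * R ^ ((n:ℝ) * ((1:ℝ) - 1/t))) := by
  have hφ2' : φ2 ≤ Cd⁻¹ * φ1 := by
    rw [← mul_le_mul_iff_right₀ hCd, ← mul_assoc, mul_inv_cancel₀ hCd.ne', one_mul]; exact hφ
  have hRcomb : R ^ ((n:ℝ) * (-(1/p₂))) * R ^ ((n:ℝ) * (1/s - 1/t)) * R ^ ((n:ℝ) * (1/p₁))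
      = R ^ ((n:ℝ) * ((1:ℝ) - 1/t)) := by
    rw [← Real.rpow_add hR, ← Real.rpow_add hR]
    congr 1
    linear_combination (n:ℝ) * hsum
  have hccomb : c0r ^ (-(1/p₂)) * c0r ^ (1/s - 1/t) * c0r ^ (1/p₁) = c0r ^ ((1:ℝ) - 1/t) := by
    rw [← Real.rpow_add hc, ← Real.rpow_add hc]
    congr 1 <;> linarith
  rw [aux_rpow1 hR hc, aux_rpow hR hc (by norm_num : (0:ℝ) < 3), aux_rpow hR hc (by norm_num : (0:ℝ) < 2)]
  calc R ^ ((n:ℝ) * (-(1/p₂))) * c0r ^ (-(1/p₂)) *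
        (3 ^ ((n:ℝ) * (1/s - 1/t)) * (R ^ ((n:ℝ) * (1/s - 1/t)) * c0r ^ (1/s - 1/t))) *
        (2 ^ ((n:ℝ) * (1/p₁)) * (R ^ ((n:ℝ) * (1/p₁)) * c0r ^ (1/p₁))) * φ2
      = (3 ^ ((n:ℝ) * (1/s - 1/t)) * 2 ^ ((n:ℝ) * (1/p₁))) *
          (R ^ ((n:ℝ) * (-(1/p₂))) * R ^ ((n:ℝ) * (1/s - 1/t)) * R ^ ((n:ℝ) * (1/p₁))) *
          (c0r ^ (-(1/p₂)) * c0r ^ (1/s - 1/t) * c0r ^ (1/p₁)) * φ2 := by ring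
    _ = (3 ^ ((n:ℝ) * (1/s - 1/t)) * 2 ^ ((n:ℝ) * (1/p₁))) * R ^ ((n:ℝ) * ((1:ℝ) - 1/t)) *
          c0r ^ ((1:ℝ) - 1/t) * φ2 := by rw [hRcomb, hccomb]
    _ ≤ (3 ^ ((n:ℝ) * (1/s - 1/t)) * 2 ^ ((n:ℝ) * (1/p₁))) * R ^ ((n:ℝ) * ((1:ℝ) - 1/t)) *
          c0r ^ ((1:ℝ) - 1/t) * (Cd⁻¹ * φ1) := by
        apply mul_le_mul_of_nonneg_left hφ2' (by positivity)
    _ = Cd⁻¹ * (3 ^ ((n:ℝ) * (1/s - 1/t)) * 2 ^ ((n:ℝ) * (1/p₁)) * c0r ^ ((1:ℝ) - 1/t)) *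
        (φ1 * R ^ ((n:ℝ) * ((1:ℝ) - 1/t))) := by ring

/-- local-part estimate. For `f ∈ L^{p₁,φ}`, a ball `B = B(a,R)` and
`f₁ = f·χ_{B(a,2R)}`, one has
`((1/|B|) ∫_B |I_{α,γ} f₁|^{p₂})^{1/p₂} ≤ C ψ(R) ‖K_{α,γ}‖_{L^{s,t}} ‖f‖_{L^{p₁,φ}}`,
where `ψ(r) = φ(r) r^{n/t'}`, `1 ≤ s < t = n/(n-α)`, `s < p₂`, `1/p₂ = 1/p₁ - 1/s'`. -/
theorem besselRiesz_local_estimate (n : ℕ) (hn : 1 ≤ n) (α γ p₁ p₂ s t : ℝ) (φ : ℝ → ℝ)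
    (hα0 : 0 < α) (hαn : α < n) (hγ : 0 ≤ γ)
    (hp₁ : 1 ≤ p₁) (hp₁n : p₁ < n / α) (hφ : IsClassG n p₁ φ)
    (hs : 1 ≤ s) (hst : s < t) (ht : t = n / (n - α))
    (hp₂ : 1 / p₂ = 1 / p₁ - (1 - 1 / s)) (hsp₂ : s < p₂) :
    ∃ C : ℝ, 0 < C ∧ ∀ f : EuclideanSpace ℝ (Fin n) → ℝ,
      Measurable f → gMorreyNorm n p₁ φ f ≠ ⊤ →
      ∀ (a : EuclideanSpace ℝ (Fin n)) (R : ℝ), 0 < R →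
      ((volume (ball a R))⁻¹ *
          ∫⁻ x in ball a R, ENNReal.ofReal
            (|besselRiesz n α γ (Set.indicator (ball a (2 * R)) f) x| ^ p₂)) ^ (1 / p₂) ≤
        ENNReal.ofReal (C * (φ R * R ^ (n * (1 - 1 / t)))) *
          morreyNorm n s t (besselRieszKernel n α γ) * gMorreyNorm n p₁ φ f := by
  obtain ⟨hφpos, ⟨Cd, hCd, hCdle⟩, -⟩ := hφ
  have hs0 : (0:ℝ) < s := lt_of_lt_of_le one_pos hs
  have hp₁0 : (0:ℝ) < p₁ := lt_of_lt_of_le one_pos hp₁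
  have hp₂0 : (0:ℝ) < p₂ := lt_trans hs0 hsp₂
  have hp₂' : 1/p₂ = 1/p₁ + 1/s - 1 := by rw [hp₂]; ring
  haveI : Nontrivial (EuclideanSpace ℝ (Fin n)) := by
    apply Module.nontrivial_of_finrank_pos (R := ℝ)
    rw [finrank_euclideanSpace_fin]; omega
  have hc₀0 : volume (ball (0 : EuclideanSpace ℝ (Fin n)) 1) ≠ 0 :=
    (measure_ball_pos volume _ one_pos).ne'
  have hc₀top : volume (ball (0 : EuclideanSpace ℝ (Fin n)) 1) ≠ ⊤ := measure_ball_lt_top.ne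
  set c0r : ℝ := (volume (ball (0 : EuclideanSpace ℝ (Fin n)) 1)).toReal with hc0rdef
  have hc0r : 0 < c0r := ENNReal.toReal_pos hc₀0 hc₀top
  have hball : ∀ (c : EuclideanSpace ℝ (Fin n)) (r : ℝ), 0 ≤ r →
      volume (ball c r) = ENNReal.ofReal (r ^ n * c0r) := by
    intro c r hr
    rw [Measure.addHaar_ball _ _ hr, finrank_euclideanSpace_fin,
      ENNReal.ofReal_mul (pow_nonneg hr n), hc0rdef, ENNReal.ofReal_toReal hc₀top]
  refine ⟨Cd⁻¹ * (3 ^ ((n:ℝ) * (1/s - 1/t)) * 2 ^ ((n:ℝ) * (1/p₁)) * c0r ^ ((1:ℝ) - 1/t)),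
    by positivity, ?_⟩
  intro f hf _hfN a R hR
  have h2R : (0:ℝ) < 2 * R := by linarith
  have h3R : (0:ℝ) < 3 * R := by linarith
  have hKnn : ∀ x : EuclideanSpace ℝ (Fin n), 0 ≤ besselRieszKernel n α γ x := by
    intro x; unfold besselRieszKernel; positivity
  have hKmeas : Measurable (besselRieszKernel n α γ) := by
    unfold besselRieszKernel
    exact (measurable_norm.pow_const _).div ((measurable_const.add measurable_norm).pow_const _)
  set F : EuclideanSpace ℝ (Fin n) → ℝ≥0∞ :=
    (ball (0 : EuclideanSpace ℝ (Fin n)) (3*R)).indicator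
      fun x => ENNReal.ofReal (besselRieszKernel n α γ x) with hFdef
  set G : EuclideanSpace ℝ (Fin n) → ℝ≥0∞ :=
    (ball a (2*R)).indicator fun y => ENNReal.ofReal |f y| with hGdef
  have hFmeas : Measurable F := by
    rw [hFdef]
    exact Measurable.indicator (ENNReal.measurable_ofReal.comp hKmeas) measurableSet_ball
  have hGmeas : Measurable G := by
    rw [hGdef]
    exact Measurable.indicator (ENNReal.measurable_ofReal.comp hf.abs) measurableSet_ball
  -- pointwise bound on the ball
  have claim1 : ∀ x ∈ ball a R,
      ENNReal.ofReal (|besselRiesz n α γ (Set.indicator (ball a (2 * R)) f) x| ^ p₂) ≤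
        (∫⁻ y, F (x - y) * G y) ^ p₂ := by
    intro x hx
    rw [← ENNReal.ofReal_rpow_of_nonneg (abs_nonneg _) hp₂0.le]
    refine ENNReal.rpow_le_rpow ?_ hp₂0.le
    calc ENNReal.ofReal |besselRiesz n α γ (Set.indicator (ball a (2 * R)) f) x|
        = (‖∫ y, besselRieszKernel n α γ (x - y) *
            Set.indicator (ball a (2 * R)) f y‖₊ : ℝ≥0∞) := by
          rw [← enorm_eq_nnnorm, Real.enorm_eq_ofReal_abs]; rfl
      _ ≤ ∫⁻ y, (‖besselRieszKernel n α γ (x - y) *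
            Set.indicator (ball a (2 * R)) f y‖₊ : ℝ≥0∞) :=
          enorm_integral_le_lintegral_enorm _
      _ = ∫⁻ y, F (x - y) * G y := by
          apply lintegral_congr; intro y
          rw [← enorm_eq_nnnorm, Real.enorm_eq_ofReal_abs, abs_mul, ENNReal.ofReal_mul (abs_nonneg _),
            abs_of_nonneg (hKnn _)]
          by_cases hy : y ∈ ball a (2*R)
          · have hxy : x - y ∈ ball (0 : EuclideanSpace ℝ (Fin n)) (3*R) := by
              rw [mem_ball_zero_iff]
              have h1 : dist x a < R := mem_ball.mp hx
              have h2 : dist y a < 2*R := mem_ball.mp hy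
              calc ‖x - y‖ = dist x y := (dist_eq_norm x y).symm
                _ ≤ dist x a + dist a y := dist_triangle x a y
                _ < 3 * R := by rw [dist_comm a y]; linarith
            rw [hFdef, hGdef]
            rw [Set.indicator_of_mem hy, Set.indicator_of_mem hy, Set.indicator_of_mem hxy]
          · rw [hFdef, hGdef]
            rw [Set.indicator_of_notMem hy, Set.indicator_of_notMem hy]
            simp
  have hconv : Measurable fun x => ∫⁻ y, F (x - y) * G y :=
    Measurable.lintegral_prod_right
      ((hFmeas.comp (measurable_fst.sub measurable_snd)).mul (hGmeas.comp measurable_snd))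
  -- main integral bound via Young's inequality
  have step_int : (∫⁻ x in ball a R, ENNReal.ofReal
      (|besselRiesz n α γ (Set.indicator (ball a (2 * R)) f) x| ^ p₂)) ≤
      (∫⁻ x, F x ^ s) ^ (p₂ / s) * (∫⁻ x, G x ^ p₁) ^ (p₂ / p₁) :=
    calc (∫⁻ x in ball a R, ENNReal.ofReal
          (|besselRiesz n α γ (Set.indicator (ball a (2 * R)) f) x| ^ p₂))
        ≤ ∫⁻ x in ball a R, (∫⁻ y, F (x - y) * G y) ^ p₂ :=
          setLIntegral_mono (hconv.pow_const p₂) claim1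
      _ ≤ ∫⁻ x, (∫⁻ y, F (x - y) * G y) ^ p₂ := setLIntegral_le_lintegral _ _
      _ ≤ _ := young_conv F G hFmeas hGmeas hp₁ hs hsp₂ hp₂'
  -- kernel integral vs Morrey norm
  have hIK_eq : (∫⁻ x, F x ^ s) =
      ∫⁻ x in ball (0 : EuclideanSpace ℝ (Fin n)) (3*R),
        ENNReal.ofReal (|besselRieszKernel n α γ x| ^ s) := by
    rw [← lintegral_indicator measurableSet_ball]
    apply lintegral_congr; intro x
    by_cases hx : x ∈ ball (0 : EuclideanSpace ℝ (Fin n)) (3*R)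
    · rw [hFdef, Set.indicator_of_mem hx, Set.indicator_of_mem hx,
        abs_of_nonneg (hKnn x), ENNReal.ofReal_rpow_of_nonneg (hKnn x) hs0.le]
    · rw [hFdef, Set.indicator_of_notMem hx, Set.indicator_of_notMem hx,
        ENNReal.zero_rpow_of_pos hs0]
  have hv30 : volume (ball (0 : EuclideanSpace ℝ (Fin n)) (3*R)) ≠ 0 :=
    (measure_ball_pos volume _ h3R).ne'
  have hv3top : volume (ball (0 : EuclideanSpace ℝ (Fin n)) (3*R)) ≠ ⊤ := measure_ball_lt_top.ne
  have hMbound : (∫⁻ x, F x ^ s) ^ (1/s) ≤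
      volume (ball (0 : EuclideanSpace ℝ (Fin n)) (3*R)) ^ (1/s - 1/t) *
        morreyNorm n s t (besselRieszKernel n α γ) := by
    have hterm : volume (ball (0 : EuclideanSpace ℝ (Fin n)) (3*R)) ^ (1/t - 1/s) *
        (∫⁻ x in ball (0 : EuclideanSpace ℝ (Fin n)) (3*R),
          ENNReal.ofReal (|besselRieszKernel n α γ x| ^ s)) ^ (1/s) ≤
          morreyNorm n s t (besselRieszKernel n α γ) := by
      rw [morreyNorm]
      apply le_iSup_of_le (0 : EuclideanSpace ℝ (Fin n))
      apply le_iSup_of_le (3*R)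
      exact le_iSup_of_le h3R le_rfl
    rw [hIK_eq]
    calc (∫⁻ x in ball (0 : EuclideanSpace ℝ (Fin n)) (3*R),
          ENNReal.ofReal (|besselRieszKernel n α γ x| ^ s)) ^ (1/s)
        = volume (ball (0 : EuclideanSpace ℝ (Fin n)) (3*R)) ^ (1/s - 1/t) *
            (volume (ball (0 : EuclideanSpace ℝ (Fin n)) (3*R)) ^ (1/t - 1/s) *
              (∫⁻ x in ball (0 : EuclideanSpace ℝ (Fin n)) (3*R),
                ENNReal.ofReal (|besselRieszKernel n α γ x| ^ s)) ^ (1/s)) := by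
          rw [← mul_assoc, ← ENNReal.rpow_add _ _ hv30 hv3top,
            show (1/s - 1/t) + (1/t - 1/s) = 0 by ring, ENNReal.rpow_zero, one_mul]
      _ ≤ _ := mul_le_mul_right hterm _
  -- function integral vs generalized Morrey norm
  have hIg_eq : (∫⁻ x, G x ^ p₁) = ∫⁻ x in ball a (2*R), ENNReal.ofReal (|f x| ^ p₁) := by
    rw [← lintegral_indicator measurableSet_ball]
    apply lintegral_congr; intro x
    by_cases hx : x ∈ ball a (2*R)
    · rw [hGdef, Set.indicator_of_mem hx, Set.indicator_of_mem hx,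
        ENNReal.ofReal_rpow_of_nonneg (abs_nonneg _) hp₁0.le]
    · rw [hGdef, Set.indicator_of_notMem hx, Set.indicator_of_notMem hx,
        ENNReal.zero_rpow_of_pos hp₁0]
  have hv20 : volume (ball a (2*R)) ≠ 0 := (measure_ball_pos volume _ h2R).ne'
  have hv2top : volume (ball a (2*R)) ≠ ⊤ := measure_ball_lt_top.ne
  have hA0 : ENNReal.ofReal (φ (2*R)) ≠ 0 := (ENNReal.ofReal_pos.mpr (hφpos _ h2R)).ne'
  have hAt : ENNReal.ofReal (φ (2*R)) ≠ ⊤ := ENNReal.ofReal_ne_top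
  have hB0 : volume (ball a (2*R)) ^ (1/p₁) ≠ 0 :=
    (ENNReal.rpow_pos (pos_iff_ne_zero.mpr hv20) hv2top).ne'
  have hBt : volume (ball a (2*R)) ^ (1/p₁) ≠ ⊤ :=
    ENNReal.rpow_ne_top_of_nonneg (by positivity) hv2top
  have hNbound : (∫⁻ x, G x ^ p₁) ^ (1/p₁) ≤
      ENNReal.ofReal (φ (2*R)) * volume (ball a (2*R)) ^ (1/p₁) * gMorreyNorm n p₁ φ f := by
    have hterm : (ENNReal.ofReal (φ (2*R)))⁻¹ *
        ((volume (ball a (2*R)))⁻¹ *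
          ∫⁻ x in ball a (2*R), ENNReal.ofReal (|f x| ^ p₁)) ^ (1/p₁)
          ≤ gMorreyNorm n p₁ φ f := by
      rw [gMorreyNorm]
      apply le_iSup_of_le a
      apply le_iSup_of_le (2*R)
      exact le_iSup_of_le h2R le_rfl
    rw [hIg_eq]
    calc (∫⁻ x in ball a (2*R), ENNReal.ofReal (|f x| ^ p₁)) ^ (1/p₁)
        = (ENNReal.ofReal (φ (2*R)) * volume (ball a (2*R)) ^ (1/p₁)) *
            ((ENNReal.ofReal (φ (2*R)))⁻¹ *
              ((volume (ball a (2*R)))⁻¹ *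
                ∫⁻ x in ball a (2*R), ENNReal.ofReal (|f x| ^ p₁)) ^ (1/p₁)) := by
          rw [ENNReal.mul_rpow_of_nonneg _ _ (by positivity : (0:ℝ) ≤ 1/p₁), ENNReal.inv_rpow]
          rw [show ∀ A B X : ℝ≥0∞, A * B * (A⁻¹ * (B⁻¹ * X)) = (A * A⁻¹) * ((B * B⁻¹) * X)
              from fun A B X => by ring,
            ENNReal.mul_inv_cancel hA0 hAt, ENNReal.mul_inv_cancel hB0 hBt, one_mul, one_mul]
      _ ≤ _ := mul_le_mul_right hterm _
  -- nonnegativity facts for the real computation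
  have e1nn : (0:ℝ) ≤ (R ^ n * c0r) ^ (-(1/p₂)) := by positivity
  have e12nn : (0:ℝ) ≤ (R ^ n * c0r) ^ (-(1/p₂)) * ((3*R) ^ n * c0r) ^ (1/s - 1/t) := by
    positivity
  have e123nn : (0:ℝ) ≤ (R ^ n * c0r) ^ (-(1/p₂)) * ((3*R) ^ n * c0r) ^ (1/s - 1/t) *
      ((2*R) ^ n * c0r) ^ (1/p₁) := by positivity
  -- final chain
  calc ((volume (ball a R))⁻¹ * ∫⁻ x in ball a R, ENNReal.ofReal
        (|besselRiesz n α γ (Set.indicator (ball a (2 * R)) f) x| ^ p₂)) ^ (1 / p₂)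
      ≤ ((volume (ball a R))⁻¹ *
          ((∫⁻ x, F x ^ s) ^ (p₂ / s) * (∫⁻ x, G x ^ p₁) ^ (p₂ / p₁))) ^ (1/p₂) :=
        ENNReal.rpow_le_rpow (mul_le_mul_right step_int _) (by positivity)
    _ = (volume (ball a R) ^ (1/p₂))⁻¹ *
          ((∫⁻ x, F x ^ s) ^ (1/s) * (∫⁻ x, G x ^ p₁) ^ (1/p₁)) := by
        rw [ENNReal.mul_rpow_of_nonneg _ _ (by positivity : (0:ℝ) ≤ 1/p₂),
          ENNReal.mul_rpow_of_nonneg _ _ (by positivity : (0:ℝ) ≤ 1/p₂),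
          ENNReal.inv_rpow, ← ENNReal.rpow_mul, ← ENNReal.rpow_mul,
          show p₂ / s * (1/p₂) = 1/s by field_simp,
          show p₂ / p₁ * (1/p₂) = 1/p₁ by field_simp]
    _ ≤ (volume (ball a R) ^ (1/p₂))⁻¹ *
          ((volume (ball (0 : EuclideanSpace ℝ (Fin n)) (3*R)) ^ (1/s - 1/t) *
            morreyNorm n s t (besselRieszKernel n α γ)) *
           (ENNReal.ofReal (φ (2*R)) * volume (ball a (2*R)) ^ (1/p₁) *
            gMorreyNorm n p₁ φ f)) :=
        mul_le_mul_right (mul_le_mul' hMbound hNbound) _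
    _ = ((volume (ball a R) ^ (1/p₂))⁻¹ *
          volume (ball (0 : EuclideanSpace ℝ (Fin n)) (3*R)) ^ (1/s - 1/t) *
          volume (ball a (2*R)) ^ (1/p₁) * ENNReal.ofReal (φ (2*R))) *
          morreyNorm n s t (besselRieszKernel n α γ) * gMorreyNorm n p₁ φ f := by ring
    _ ≤ ENNReal.ofReal ((Cd⁻¹ * (3 ^ ((n:ℝ) * (1/s - 1/t)) * 2 ^ ((n:ℝ) * (1/p₁)) *
            c0r ^ ((1:ℝ) - 1/t))) * (φ R * R ^ ((n:ℝ) * (1 - 1/t)))) *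
          morreyNorm n s t (besselRieszKernel n α γ) * gMorreyNorm n p₁ φ f := by
        refine mul_le_mul_left (mul_le_mul_left ?_ _) _
        rw [hball a R hR.le, hball a (2*R) h2R.le,
          hball (0 : EuclideanSpace ℝ (Fin n)) (3*R) h3R.le]
        rw [← ENNReal.rpow_neg,
          ENNReal.ofReal_rpow_of_pos (show (0:ℝ) < R ^ n * c0r by positivity),
          ENNReal.ofReal_rpow_of_pos (show (0:ℝ) < (3*R) ^ n * c0r by positivity),
          ENNReal.ofReal_rpow_of_pos (show (0:ℝ) < (2*R) ^ n * c0r by positivity),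
          ← ENNReal.ofReal_mul e1nn, ← ENNReal.ofReal_mul e12nn, ← ENNReal.ofReal_mul e123nn]
        apply ENNReal.ofReal_le_ofReal
        exact key_real_ineq n hR hc0r hCd (hCdle R (2*R) hR (by linarith)) (hφpos _ h2R).le
          (by rw [hp₂']; ring)
end

section
/- Let n ≥ 1 be an integer, 0 < α < n and γ ≥ 0. Let φ : (0,∞) → (0,∞) be such that r ↦ φ(r) r^n is almost increasing, and define f₀(x) := φ(|x|) for x ≠ 0. Then there exists a constant C > 0 (depending only on n, α, γ) such that for every x ∈ ℝⁿ with x ≠ 0, I_{α,γ}f₀(x) ≥ ∫_{B(x,2|x|)} K_{α,γ}(x−y) f₀(y) dy ≥ C φ(|x|) |x|^n K_{α,γ}(x). -/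
open MeasureTheory Metric
open scoped ENNReal NNReal

/-- if `r ↦ φ(r) r^n` is almost increasing and `f₀(x) = φ(|x|)`, then
there is `C > 0` such that for every `x ≠ 0`,
`I_{α,γ} f₀(x) ≥ ∫_{B(x,2|x|)} K_{α,γ}(x-y) f₀(y) dy ≥ C φ(|x|) |x|^n K_{α,γ}(x)`
(integrals of the nonnegative integrand interpreted as lower Lebesgue integrals). -/
theorem besselRiesz_lower_pointwise (n : ℕ) (hn : 1 ≤ n) (α γ : ℝ) (φ : ℝ → ℝ)
    (hα0 : 0 < α) (hαn : α < n) (hγ : 0 ≤ γ)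
    (hφpos : ∀ r : ℝ, 0 < r → 0 < φ r)
    (hφinc : IsAlmostIncreasing (fun r => φ r * r ^ (n : ℝ))) :
    ∃ C : ℝ, 0 < C ∧ ∀ x : EuclideanSpace ℝ (Fin n), x ≠ 0 →
      (∫⁻ y, ENNReal.ofReal (besselRieszKernel n α γ (x - y) * φ ‖y‖)) ≥
          (∫⁻ y in ball x (2 * ‖x‖),
            ENNReal.ofReal (besselRieszKernel n α γ (x - y) * φ ‖y‖)) ∧
        (∫⁻ y in ball x (2 * ‖x‖),
            ENNReal.ofReal (besselRieszKernel n α γ (x - y) * φ ‖y‖)) ≥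
          ENNReal.ofReal (C * (φ ‖x‖ * ‖x‖ ^ (n : ℝ) * besselRieszKernel n α γ x)) := by
  obtain ⟨C₁, hC₁, hinc⟩ := hφinc
  have hω : 0 < (volume (ball (0 : EuclideanSpace ℝ (Fin n)) 1)).toReal :=
    ENNReal.toReal_pos (measure_ball_pos _ _ one_pos).ne' measure_ball_lt_top.ne
  set ω := (volume (ball (0 : EuclideanSpace ℝ (Fin n)) 1)).toReal with hωdef
  have hc'pos : (0:ℝ) < (2:ℝ) ^ (α - (n:ℝ) - γ) / (C₁ * 3 ^ (n:ℝ)) := by positivity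
  refine ⟨(2:ℝ) ^ (α - (n:ℝ) - γ) / (C₁ * 3 ^ (n:ℝ)) * ω, by positivity, ?_⟩
  intro x hx
  have hx0 : 0 < ‖x‖ := norm_pos_iff.mpr hx
  refine ⟨setLIntegral_le_lintegral _ _, ?_⟩
  have hsub : ball ((2:ℝ) • x) ‖x‖ ⊆ ball x (2 * ‖x‖) := by
    intro y hy
    rw [mem_ball] at hy ⊢
    have ht : dist y x ≤ dist y ((2:ℝ) • x) + dist ((2:ℝ) • x) x := dist_triangle _ _ _
    have h2 : dist ((2:ℝ) • x) x = ‖x‖ := by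
      rw [dist_eq_norm]
      have h3 : (2:ℝ) • x - x = x := by module
      rw [h3]
    linarith
  refine le_trans ?_ (lintegral_mono_set hsub)
  set c' : ℝ := (2:ℝ) ^ (α - (n:ℝ) - γ) / (C₁ * 3 ^ (n:ℝ)) with hc'def
  have hK0 : 0 ≤ besselRieszKernel n α γ x := by
    unfold besselRieszKernel; positivity
  have key : ∀ y ∈ ball ((2:ℝ) • x) ‖x‖,
      ENNReal.ofReal (c' * (φ ‖x‖ * besselRieszKernel n α γ x))
        ≤ ENNReal.ofReal (besselRieszKernel n α γ (x - y) * φ ‖y‖) := by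
    intro y hy
    rw [mem_ball] at hy
    have h2x : dist ((2:ℝ) • x) x = ‖x‖ := by
      rw [dist_eq_norm]
      have h3 : (2:ℝ) • x - x = x := by module
      rw [h3]
    have h2x0 : ‖(2:ℝ) • x‖ = 2 * ‖x‖ := by
      rw [norm_smul]; simp
    have hxy1 : ‖x - y‖ < 2 * ‖x‖ := by
      have ht := dist_triangle x ((2:ℝ) • x) y
      rw [dist_comm x ((2:ℝ) • x), dist_comm ((2:ℝ) • x) y] at ht
      rw [← dist_eq_norm]
      linarith
    have hxy0 : 0 < ‖x - y‖ := by
      have ht := dist_triangle ((2:ℝ) • x) y x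
      rw [h2x, dist_comm ((2:ℝ) • x) y] at ht
      rw [← dist_eq_norm, dist_comm x y]
      linarith
    have hy1 : ‖x‖ ≤ ‖y‖ := by
      have ht : ‖(2:ℝ) • x‖ - ‖(2:ℝ) • x - y‖ ≤ ‖y‖ := by
        have := norm_sub_norm_le ((2:ℝ) • x) ((2:ℝ) • x - y)
        simpa using this
      rw [dist_eq_norm'] at hy
      rw [h2x0] at ht
      linarith
    have hy2 : ‖y‖ ≤ 3 * ‖x‖ := by
      have ht : ‖y‖ ≤ ‖(2:ℝ) • x‖ + ‖y - (2:ℝ) • x‖ := by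
        have := norm_add_le ((2:ℝ) • x) (y - (2:ℝ) • x)
        simpa using this
      rw [dist_eq_norm] at hy
      rw [h2x0] at ht
      linarith
    have hy0 : 0 < ‖y‖ := lt_of_lt_of_le hx0 hy1
    have hφy : φ ‖x‖ / (C₁ * 3 ^ (n:ℝ)) ≤ φ ‖y‖ := by
      have h1 := hinc ‖x‖ ‖y‖ hx0 hy1
      simp only at h1
      have h3 : ‖y‖ ^ (n:ℝ) ≤ (3 * ‖x‖) ^ (n:ℝ) :=
        Real.rpow_le_rpow hy0.le hy2 (Nat.cast_nonneg n)
      have h4 : (3 * ‖x‖) ^ (n:ℝ) = 3 ^ (n:ℝ) * ‖x‖ ^ (n:ℝ) :=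
        Real.mul_rpow (by norm_num) hx0.le
      have hφyp := hφpos ‖y‖ hy0
      have hxn : (0:ℝ) < ‖x‖ ^ (n:ℝ) := Real.rpow_pos_of_pos hx0 _
      rw [div_le_iff₀ (by positivity)]
      have h5 : φ ‖x‖ * ‖x‖ ^ (n:ℝ) ≤ φ ‖y‖ * (C₁ * 3 ^ (n:ℝ)) * ‖x‖ ^ (n:ℝ) := by
        calc φ ‖x‖ * ‖x‖ ^ (n:ℝ) ≤ C₁ * (φ ‖y‖ * ‖y‖ ^ (n:ℝ)) := h1
          _ ≤ C₁ * (φ ‖y‖ * (3 ^ (n:ℝ) * ‖x‖ ^ (n:ℝ))) := by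
              have h3' : ‖y‖ ^ (n:ℝ) ≤ 3 ^ (n:ℝ) * ‖x‖ ^ (n:ℝ) := h4 ▸ h3
              exact mul_le_mul_of_nonneg_left
                (mul_le_mul_of_nonneg_left h3' hφyp.le) hC₁.le
          _ = φ ‖y‖ * (C₁ * 3 ^ (n:ℝ)) * ‖x‖ ^ (n:ℝ) := by ring
      exact le_of_mul_le_mul_right h5 hxn
    have hKb : (2:ℝ) ^ (α - (n:ℝ) - γ) * besselRieszKernel n α γ x
        ≤ besselRieszKernel n α γ (x - y) := by
      unfold besselRieszKernel
      have hnum : (2 * ‖x‖) ^ (α - (n:ℝ)) ≤ ‖x - y‖ ^ (α - (n:ℝ)) :=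
        Real.rpow_le_rpow_of_nonpos hxy0 hxy1.le (by push_cast; linarith)
      have hden : (1 + ‖x - y‖) ^ γ ≤ (2 * (1 + ‖x‖)) ^ γ :=
        Real.rpow_le_rpow (by positivity) (by linarith) hγ
      have hd0 : (0:ℝ) < (1 + ‖x - y‖) ^ γ := Real.rpow_pos_of_pos (by positivity) _
      have hmain : (2 * ‖x‖) ^ (α - (n:ℝ)) / (2 * (1 + ‖x‖)) ^ γ
          ≤ ‖x - y‖ ^ (α - (n:ℝ)) / (1 + ‖x - y‖) ^ γ :=
        div_le_div₀ (Real.rpow_nonneg hxy0.le _) hnum hd0 hden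
      refine le_trans (le_of_eq ?_) hmain
      rw [Real.mul_rpow (by norm_num) hx0.le, Real.mul_rpow (by norm_num : (0:ℝ) ≤ 2) (by positivity : (0:ℝ) ≤ 1 + ‖x‖),
        Real.rpow_sub (by norm_num : (0:ℝ) < 2)]
      field_simp
    apply ENNReal.ofReal_le_ofReal
    have hφxp := hφpos ‖x‖ hx0
    have hφyp := hφpos ‖y‖ hy0
    have hKxy0 : 0 ≤ besselRieszKernel n α γ (x - y) := by
      unfold besselRieszKernel; positivity
    calc c' * (φ ‖x‖ * besselRieszKernel n α γ x)
        = ((2:ℝ) ^ (α - (n:ℝ) - γ) * besselRieszKernel n α γ x) * (φ ‖x‖ / (C₁ * 3 ^ (n:ℝ))) := by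
          rw [hc'def]; ring
      _ ≤ besselRieszKernel n α γ (x - y) * φ ‖y‖ :=
          mul_le_mul hKb hφy (by positivity) hKxy0
  calc ENNReal.ofReal (c' * ω * (φ ‖x‖ * ‖x‖ ^ (n:ℝ) * besselRieszKernel n α γ x))
      = ENNReal.ofReal (c' * (φ ‖x‖ * besselRieszKernel n α γ x)) *
          (ENNReal.ofReal (‖x‖ ^ (n:ℝ)) * ENNReal.ofReal ω) := by
        rw [← ENNReal.ofReal_mul (Real.rpow_nonneg (norm_nonneg x) _),
          ← ENNReal.ofReal_mul
            (mul_nonneg hc'pos.le (mul_nonneg (hφpos ‖x‖ hx0).le hK0))]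
        congr 1; ring
    _ = ENNReal.ofReal (c' * (φ ‖x‖ * besselRieszKernel n α γ x)) *
        volume (ball ((2:ℝ) • x) ‖x‖) := by
        rw [hωdef, ENNReal.ofReal_toReal measure_ball_lt_top.ne,
          Measure.addHaar_ball_of_pos volume ((2:ℝ) • x) hx0]
        congr 3
        rw [finrank_euclideanSpace_fin, ← Real.rpow_natCast ‖x‖ n]
    _ = ∫⁻ _ in ball ((2:ℝ) • x) ‖x‖,
          ENNReal.ofReal (c' * (φ ‖x‖ * besselRieszKernel n α γ x)) :=
        (setLIntegral_const _ _).symm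
    _ ≤ _ := setLIntegral_mono' measurableSet_ball key
end

section
/- Let n ≥ 1 be an integer, 0 < α < n, and 1 ≤ p₁ < t = n/(n−α). Then there exists a constant C > 0 depending only on n and p₁ such that ||K_α||_{L^{p₁,t}}^{p₁} ≥ C/((α−n)p₁ + n); moreover, since (α−n)p₁ + n ≤ α, one has ||K_α||_{L^{p₁,t}}^{p₁} ≥ C/α. -/
open MeasureTheory Metric
open scoped ENNReal NNReal

private lemma rkml_ofReal_integral_le {X : Type*} [MeasurableSpace X] (μ : MeasureTheory.Measure X)
    (f : X → ℝ) (hf : ∀ x, 0 ≤ f x) :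
    ENNReal.ofReal (∫ x, f x ∂μ) ≤ ∫⁻ x, ENNReal.ofReal (f x) ∂μ := by
  calc ENNReal.ofReal (∫ x, f x ∂μ) ≤ ↑‖∫ x, f x ∂μ‖₊ := Real.ofReal_le_enorm _
    _ ≤ ∫⁻ x, ↑‖f x‖₊ ∂μ := MeasureTheory.enorm_integral_le_lintegral_enorm _
    _ = ∫⁻ x, ENNReal.ofReal (f x) ∂μ :=
        MeasureTheory.lintegral_congr fun x => (Real.enorm_eq_ofReal (hf x))

private lemma rkml_ball_int (n : ℕ) (hn : 1 ≤ n) (s : ℝ) (hs : s < 0) (hβ : 0 < s + n) :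
    ∫ x in ball (0 : EuclideanSpace ℝ (Fin n)) 1, ‖x‖ ^ s
      = n * (volume (ball (0 : EuclideanSpace ℝ (Fin n)) 1)).toReal / (s + n) := by
  set E := EuclideanSpace ℝ (Fin n)
  haveI : Nontrivial E := by
    have : 0 < Module.finrank ℝ E := by
      rw [finrank_euclideanSpace_fin]; omega
    exact Module.nontrivial_of_finrank_pos this
  set f : ℝ → ℝ := (Set.Ioo (0:ℝ) 1).indicator (fun r => r ^ s) with hf
  have h1 : ∫ x in ball (0 : E) 1, ‖x‖ ^ s = ∫ x : E, f ‖x‖ := by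
    rw [← integral_indicator measurableSet_ball]
    congr 1
    funext x
    rcases lt_or_ge ‖x‖ 1 with h | h
    · rcases eq_or_ne x 0 with rfl | hx
      · simp [hf, Real.zero_rpow hs.ne]
      · have hx' : 0 < ‖x‖ := norm_pos_iff.2 hx
        rw [Set.indicator_of_mem (by simpa [mem_ball, dist_zero_right] using h),
          hf, Set.indicator_of_mem (Set.mem_Ioo.2 ⟨hx', h⟩)]
    · rw [Set.indicator_of_notMem (by simp [mem_ball, dist_zero_right]; linarith),
        hf, Set.indicator_of_notMem (by simp [Set.mem_Ioo]; intro; linarith)]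
  rw [h1, integral_fun_norm_addHaar volume f, finrank_euclideanSpace_fin]
  have h2 : ∫ y in Set.Ioi (0:ℝ), y ^ (n-1) • f y = 1 / (s + n) := by
    have e1 : ∀ y : ℝ, y ^ (n-1) • f y
        = (Set.Ioo (0:ℝ) 1).indicator (fun r => r ^ ((s + n) - 1)) y := by
      intro y
      by_cases hy : y ∈ Set.Ioo (0:ℝ) 1
      · rw [hf]
        rw [Set.indicator_of_mem hy, Set.indicator_of_mem hy, smul_eq_mul]
        have : (y : ℝ) ^ (n - 1) = y ^ ((n : ℝ) - 1) := by
          rw [← Real.rpow_natCast y (n-1), Nat.cast_sub hn, Nat.cast_one]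
        rw [this, ← Real.rpow_add hy.1]
        ring_nf
      · rw [hf, Set.indicator_of_notMem hy, Set.indicator_of_notMem hy, smul_zero]
    simp only [e1]
    rw [integral_indicator measurableSet_Ioo, Measure.restrict_restrict measurableSet_Ioo,
      Set.Ioo_inter_Ioi, max_eq_left le_rfl]
    rw [← integral_Ioc_eq_integral_Ioo, ← intervalIntegral.integral_of_le zero_le_one]
    rw [integral_rpow (Or.inl (by linarith))]
    rw [sub_add_cancel, Real.one_rpow, Real.zero_rpow hβ.ne']
    ring
  rw [h2]
  simp only [nsmul_eq_mul, smul_eq_mul, measureReal_def]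
  ring

/-- for `1 ≤ p₁ < t = n/(n-α)` there is `C > 0` depending only on `n`
and `p₁` such that `‖K_α‖_{L^{p₁,t}}^{p₁} ≥ C / ((α-n)p₁ + n)`; moreover, since
`(α-n)p₁ + n ≤ α`, also `‖K_α‖_{L^{p₁,t}}^{p₁} ≥ C / α`. -/
theorem rieszKernel_morreyNorm_lower (n : ℕ) (hn : 1 ≤ n) (α p₁ t : ℝ)
    (hα0 : 0 < α) (hαn : α < n) (hp₁ : 1 ≤ p₁)
    (ht : t = n / (n - α)) (hp₁t : p₁ < t) :
    ∃ C : ℝ, 0 < C ∧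
      ENNReal.ofReal (C / ((α - n) * p₁ + n)) ≤
        morreyNorm n p₁ t (rieszKernel n α) ^ p₁ ∧
      ENNReal.ofReal (C / α) ≤ morreyNorm n p₁ t (rieszKernel n α) ^ p₁ := by
  classical
  set E := EuclideanSpace ℝ (Fin n)
  have hn0 : (0:ℝ) < n := by exact_mod_cast Nat.pos_of_ne_zero (by omega)
  have hnα : (0:ℝ) < (n:ℝ) - α := by linarith
  have ht0 : 0 < t := by rw [ht]; positivity
  have hp₁0 : (0:ℝ) < p₁ := by linarith
  set s : ℝ := (α - n) * p₁ with hs_def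
  have hs : s < 0 := mul_neg_of_neg_of_pos (by linarith) hp₁0
  have hβ : 0 < s + n := by
    have h' : p₁ < (n:ℝ) / (n - α) := ht ▸ hp₁t
    rw [lt_div_iff₀ hnα] at h'
    simp only [hs_def]; nlinarith
  have hβα : s + n ≤ α := by simp only [hs_def]; nlinarith
  set V := volume (ball (0:E) 1) with hV_def
  have hV0 : V ≠ 0 := (measure_ball_pos volume 0 one_pos).ne'
  have hVt : V ≠ ⊤ := measure_ball_lt_top.ne
  set v := V.toReal with hv_def
  have hv : 0 < v := ENNReal.toReal_pos hV0 hVt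
  refine ⟨min v⁻¹ 1 * (n * v), by positivity, ?_⟩
  set C := min v⁻¹ 1 * (n * v) with hC_def
  set I := ∫⁻ x in ball (0:E) 1, ENNReal.ofReal (|rieszKernel n α x| ^ p₁) with hI_def
  have key : ∀ x : E, ENNReal.ofReal (|rieszKernel n α x| ^ p₁) = ENNReal.ofReal (‖x‖ ^ s) := by
    intro x
    rw [rieszKernel, abs_of_nonneg (Real.rpow_nonneg (norm_nonneg x) _),
      hs_def, Real.rpow_mul (norm_nonneg x)]
  have hI : ENNReal.ofReal ((n:ℝ) * v / (s + n)) ≤ I := by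
    calc ENNReal.ofReal ((n:ℝ) * v / (s + n))
        = ENNReal.ofReal (∫ x in ball (0:E) 1, ‖x‖ ^ s) := by
          rw [rkml_ball_int n hn s hs hβ]
      _ ≤ ∫⁻ x in ball (0:E) 1, ENNReal.ofReal (‖x‖ ^ s) :=
          rkml_ofReal_integral_le _ _ (fun x => Real.rpow_nonneg (norm_nonneg x) _)
      _ = I := (lintegral_congr fun x => (key x).symm)
  have hsup : V ^ (1/t - 1/p₁) * I ^ (1/p₁) ≤ morreyNorm n p₁ t (rieszKernel n α) :=
    le_iSup_of_le (0:E) (le_iSup_of_le (1:ℝ) (le_iSup_of_le one_pos le_rfl))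
  set e : ℝ := (1/t - 1/p₁) * p₁ with he_def
  have he_eq : e = p₁ / t - 1 := by
    simp only [he_def]; field_simp
  have he1 : (-1:ℝ) ≤ e := by
    rw [he_eq]
    have : 0 < p₁ / t := by positivity
    linarith
  have he2 : e ≤ 0 := by
    rw [he_eq]
    have : p₁ / t < 1 := (div_lt_one ht0).2 hp₁t
    linarith
  have hVe : ENNReal.ofReal (min v⁻¹ 1) ≤ V ^ e := by
    rcases le_or_gt 1 V with h | h
    · calc ENNReal.ofReal (min v⁻¹ 1) ≤ ENNReal.ofReal v⁻¹ :=
            ENNReal.ofReal_le_ofReal (min_le_left _ _)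
        _ = V⁻¹ := by rw [ENNReal.ofReal_inv_of_pos hv, hv_def, ENNReal.ofReal_toReal hVt]
        _ = V ^ (-1:ℝ) := (ENNReal.rpow_neg_one V).symm
        _ ≤ V ^ e := ENNReal.rpow_le_rpow_of_exponent_le h he1
    · calc ENNReal.ofReal (min v⁻¹ 1) ≤ 1 := ENNReal.ofReal_le_one.2 (min_le_right _ _)
        _ = V ^ (0:ℝ) := by rw [ENNReal.rpow_zero]
        _ ≤ V ^ e := ENNReal.rpow_le_rpow_of_exponent_ge h.le he2
  have main : ENNReal.ofReal (C / (s + n)) ≤ morreyNorm n p₁ t (rieszKernel n α) ^ p₁ := by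
    calc ENNReal.ofReal (C / (s + n))
        = ENNReal.ofReal (min v⁻¹ 1) * ENNReal.ofReal ((n:ℝ) * v / (s + n)) := by
          rw [← ENNReal.ofReal_mul (by positivity), hC_def, mul_div_assoc]
      _ ≤ V ^ e * I := mul_le_mul' hVe hI
      _ = (V ^ (1/t - 1/p₁) * I ^ (1/p₁)) ^ p₁ := by
          rw [ENNReal.mul_rpow_of_nonneg _ _ hp₁0.le, ← ENNReal.rpow_mul,
            ← ENNReal.rpow_mul, one_div_mul_cancel hp₁0.ne', ENNReal.rpow_one, he_def]
      _ ≤ morreyNorm n p₁ t (rieszKernel n α) ^ p₁ :=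
          ENNReal.rpow_le_rpow hsup hp₁0.le
  refine ⟨main, le_trans (ENNReal.ofReal_le_ofReal ?_) main⟩
  have hC : 0 < C := by positivity
  exact div_le_div_of_nonneg_left hC.le hβ hβα
end
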